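/- arXiv:2011.08058 — 6 statements merged into one kernel-verified Lean document; each statement's English description precedes it below -/
import Mathlib

section
/- Pointwise information Gamma calculus identity (Lemma 3.2, first equality): for every smooth function f : ℝ^d → ℝ and every x ∈ ℝ^d, Γ₂(f,f)(x) + Γ_I(f,f)(x) = ‖∇²f(x)‖_F² − ⟨∇²(log π)(x) ∇f(x), ∇f(x)⟩ − ⟨γ(x), ∇²f(x) ∇f(x)⟩ + Δf(x)·⟨∇f(x), γ(x)⟩ + ⟨∇f(x), ∇(log π)(x)⟩·⟨∇f(x), γ(x)⟩, where ∇²f denotes the Hessian matrix of f and ‖·‖_F the Frobenius norm. -/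
open MeasureTheory
open scoped BigOperators

noncomputable section

/-- `i`-th partial derivative of `f` at `x`, in the coordinate direction `i`. -/
def pderiv' {d : ℕ} (f : EuclideanSpace ℝ (Fin d) → ℝ) (i : Fin d)
    (x : EuclideanSpace ℝ (Fin d)) : ℝ :=
  fderiv ℝ f x (EuclideanSpace.single i 1)

/-- second partial derivative `∂_i ∂_j f` at `x`. -/
def pderiv2 {d : ℕ} (f : EuclideanSpace ℝ (Fin d) → ℝ) (i j : Fin d)
    (x : EuclideanSpace ℝ (Fin d)) : ℝ :=
  pderiv' (fun y => pderiv' f j y) i x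

/-- Laplacian `Δf`. -/
def lap {d : ℕ} (f : EuclideanSpace ℝ (Fin d) → ℝ) (x : EuclideanSpace ℝ (Fin d)) : ℝ :=
  ∑ i, pderiv2 f i i x

/-- carré du champ `Γ₁(g,h) = ⟨∇g, ∇h⟩`. -/
def Gamma1 {d : ℕ} (g h : EuclideanSpace ℝ (Fin d) → ℝ) (x : EuclideanSpace ℝ (Fin d)) : ℝ :=
  ∑ i, pderiv' g i x * pderiv' h i x

/-- generator `L̃ h = ⟨∇ log π, ∇h⟩ + Δh`. -/
def genL {d : ℕ} (π h : EuclideanSpace ℝ (Fin d) → ℝ) (x : EuclideanSpace ℝ (Fin d)) : ℝ :=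
  Gamma1 (fun y => Real.log (π y)) h x + lap h x

/-- Gamma two operator `Γ₂(f,f) = ½ L̃ Γ₁(f,f) − Γ₁(L̃f, f)`. -/
def Gamma2 {d : ℕ} (π f : EuclideanSpace ℝ (Fin d) → ℝ) (x : EuclideanSpace ℝ (Fin d)) : ℝ :=
  (1/2 : ℝ) * genL π (fun y => Gamma1 f f y) x - Gamma1 (fun y => genL π f y) f x

/-- information Gamma operator `Γ_I(f,f) = −½⟨γ, ∇Γ₁(f,f)⟩ + (L̃f)·⟨∇f, γ⟩`. -/
def GammaI {d : ℕ} (π : EuclideanSpace ℝ (Fin d) → ℝ)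
    (γ : EuclideanSpace ℝ (Fin d) → EuclideanSpace ℝ (Fin d))
    (f : EuclideanSpace ℝ (Fin d) → ℝ) (x : EuclideanSpace ℝ (Fin d)) : ℝ :=
  -(1/2 : ℝ) * (∑ i, γ x i * pderiv' (fun y => Gamma1 f f y) i x)
    + genL π f x * (∑ i, pderiv' f i x * γ x i)

/-- the tensor `ℜ` of the paper:
`ℜ_{ij} = −∂²_{ij} log π + ((3−2d)/8) γ_i γ_j − (1/8) δ_{ij} Σ_k γ_k²
          + ½(γ_i ∂_j log π + γ_j ∂_i log π)`. -/
def Rtensor {d : ℕ} (π : EuclideanSpace ℝ (Fin d) → ℝ)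
    (γ : EuclideanSpace ℝ (Fin d) → EuclideanSpace ℝ (Fin d))
    (i j : Fin d) (x : EuclideanSpace ℝ (Fin d)) : ℝ :=
  -pderiv2 (fun y => Real.log (π y)) i j x
    + ((3 - 2 * (d : ℝ)) / 8) * γ x i * γ x j
    - (1/8 : ℝ) * (if i = j then ∑ k, (γ x k) ^ 2 else 0)
    + (1/2 : ℝ) * (γ x i * pderiv' (fun y => Real.log (π y)) j x
        + γ x j * pderiv' (fun y => Real.log (π y)) i x)

/-- the modified Hessian matrix `𝔥ess f`. -/
def hessM {d : ℕ} (γ : EuclideanSpace ℝ (Fin d) → EuclideanSpace ℝ (Fin d))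
    (f : EuclideanSpace ℝ (Fin d) → ℝ) (i j : Fin d) (x : EuclideanSpace ℝ (Fin d)) : ℝ :=
  if i = j then
    pderiv2 f i i x + (1/2 : ℝ) * (∑ k, γ x k * pderiv' f k x)
      - (1/2 : ℝ) * γ x i * pderiv' f i x
  else
    pderiv2 f i j x - (1/4 : ℝ) * (γ x i * pderiv' f j x + γ x j * pderiv' f i x)

/-- right-hand side of the Fokker–Planck equation `−∇·(p b) + Δp` with drift
`b = ∇ log π − γ`, evaluated at a density `p`. -/
def FPrhs {d : ℕ} (π : EuclideanSpace ℝ (Fin d) → ℝ)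
    (γ : EuclideanSpace ℝ (Fin d) → EuclideanSpace ℝ (Fin d))
    (p : EuclideanSpace ℝ (Fin d) → ℝ) (x : EuclideanSpace ℝ (Fin d)) : ℝ :=
  -(∑ i, pderiv' (fun y => p y * (pderiv' (fun z => Real.log (π z)) i y - γ y i)) i x)
    + lap p x

/-- `L̃* p = −∇·(p ∇ log π) + Δp`. -/
def Ltilstar {d : ℕ} (π p : EuclideanSpace ℝ (Fin d) → ℝ)
    (x : EuclideanSpace ℝ (Fin d)) : ℝ :=
  -(∑ i, pderiv' (fun y => p y * pderiv' (fun z => Real.log (π z)) i y) i x) + lap p x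

/-- Arnold–Carlen tensor `(ℜ_AC)_{ij} = −∂²_{ij} log π − ½(∂_i γ_j + ∂_j γ_i)`. -/
def RAC {d : ℕ} (π : EuclideanSpace ℝ (Fin d) → ℝ)
    (γ : EuclideanSpace ℝ (Fin d) → EuclideanSpace ℝ (Fin d))
    (i j : Fin d) (x : EuclideanSpace ℝ (Fin d)) : ℝ :=
  -pderiv2 (fun y => Real.log (π y)) i j x
    - (1/2 : ℝ) * (pderiv' (fun y => γ y j) i x + pderiv' (fun y => γ y i) j x)


section Aux
variable {d : ℕ}

lemma contDiff_pderiv' {f : EuclideanSpace ℝ (Fin d) → ℝ} (hf : ContDiff ℝ (⊤:ℕ∞) f)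
    (i : Fin d) : ContDiff ℝ (⊤:ℕ∞) (fun y => pderiv' f i y) := by
  unfold pderiv'
  exact (hf.fderiv_right (by simp)).clm_apply contDiff_const

lemma diff_pderiv' {f : EuclideanSpace ℝ (Fin d) → ℝ} (hf : ContDiff ℝ (⊤:ℕ∞) f)
    (i : Fin d) : Differentiable ℝ (fun y => pderiv' f i y) :=
  (contDiff_pderiv' hf i).differentiable (by norm_cast)

lemma contDiff_pderiv2 {f : EuclideanSpace ℝ (Fin d) → ℝ} (hf : ContDiff ℝ (⊤:ℕ∞) f)
    (i j : Fin d) : ContDiff ℝ (⊤:ℕ∞) (fun y => pderiv2 f i j y) := by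
  unfold pderiv2
  exact contDiff_pderiv' (contDiff_pderiv' hf j) i

lemma pderiv'_mul {g h : EuclideanSpace ℝ (Fin d) → ℝ} {x : EuclideanSpace ℝ (Fin d)}
    (hg : DifferentiableAt ℝ g x) (hh : DifferentiableAt ℝ h x) (i : Fin d) :
    pderiv' (fun y => g y * h y) i x = pderiv' g i x * h x + g x * pderiv' h i x := by
  unfold pderiv'
  rw [fderiv_fun_mul hg hh]
  simp
  ring

lemma pderiv'_add {g h : EuclideanSpace ℝ (Fin d) → ℝ} {x : EuclideanSpace ℝ (Fin d)}
    (hg : DifferentiableAt ℝ g x) (hh : DifferentiableAt ℝ h x) (i : Fin d) :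
    pderiv' (fun y => g y + h y) i x = pderiv' g i x + pderiv' h i x := by
  unfold pderiv'
  rw [fderiv_fun_add hg hh]
  simp

lemma pderiv'_const_mul {g : EuclideanSpace ℝ (Fin d) → ℝ} {x : EuclideanSpace ℝ (Fin d)}
    (hg : DifferentiableAt ℝ g x) (c : ℝ) (i : Fin d) :
    pderiv' (fun y => c * g y) i x = c * pderiv' g i x := by
  unfold pderiv'
  rw [fderiv_const_mul hg]
  simp

lemma pderiv'_sum {F : Fin d → EuclideanSpace ℝ (Fin d) → ℝ} {x : EuclideanSpace ℝ (Fin d)}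
    (hF : ∀ j, DifferentiableAt ℝ (F j) x) (i : Fin d) :
    pderiv' (fun y => ∑ j, F j y) i x = ∑ j, pderiv' (F j) i x := by
  unfold pderiv'
  rw [fderiv_fun_sum (fun j _ => hF j)]
  simp

lemma pderiv2_symm {f : EuclideanSpace ℝ (Fin d) → ℝ} (hf : ContDiff ℝ (⊤:ℕ∞) f)
    (i j : Fin d) (x : EuclideanSpace ℝ (Fin d)) :
    pderiv2 f i j x = pderiv2 f j i x := by
  have hdf : DifferentiableAt ℝ (fderiv ℝ f) x :=
    ((hf.fderiv_right (m := (⊤:ℕ∞)) (by simp)).differentiable (by norm_cast)) x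
  have key : ∀ a b : Fin d, pderiv2 f a b x
      = fderiv ℝ (fderiv ℝ f) x (EuclideanSpace.single a 1) (EuclideanSpace.single b 1) := by
    intro a b
    show fderiv ℝ (fun y => fderiv ℝ f y (EuclideanSpace.single b 1)) x
        (EuclideanSpace.single a 1) = _
    rw [fderiv_clm_apply hdf (differentiableAt_const _)]
    simp
  rw [key, key]
  exact (hf.contDiffAt.isSymmSndFDerivAt (by rw [minSmoothness_of_isRCLikeNormedField]; exact WithTop.coe_le_coe.mpr (le_top : (2:ℕ∞) ≤ ⊤))) _ _

lemma third_symm {f : EuclideanSpace ℝ (Fin d) → ℝ} (hf : ContDiff ℝ (⊤:ℕ∞) f)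
    (i j : Fin d) (x : EuclideanSpace ℝ (Fin d)) :
    pderiv' (fun y => pderiv2 f j i y) j x = pderiv' (fun y => pderiv2 f j j y) i x := by
  have h1 : (fun y => pderiv2 f j i y) = fun y => pderiv2 f i j y :=
    funext fun y => pderiv2_symm hf j i y
  rw [h1]
  show pderiv2 (fun y => pderiv' f j y) j i x = pderiv2 (fun y => pderiv' f j y) i j x
  exact pderiv2_symm (contDiff_pderiv' hf j) j i x

end Aux

section Aux2
variable {d : ℕ}

lemma pderiv'_Gamma1 {f : EuclideanSpace ℝ (Fin d) → ℝ} (hf : ContDiff ℝ (⊤:ℕ∞) f)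
    (j : Fin d) (x : EuclideanSpace ℝ (Fin d)) :
    pderiv' (fun y => Gamma1 f f y) j x = 2 * ∑ i, pderiv' f i x * pderiv2 f j i x := by
  have hd : ∀ i : Fin d, DifferentiableAt ℝ (fun y => pderiv' f i y * pderiv' f i y) x :=
    fun i => ((diff_pderiv' hf i) x).mul ((diff_pderiv' hf i) x)
  show pderiv' (fun y => ∑ i, pderiv' f i y * pderiv' f i y) j x = _
  rw [pderiv'_sum hd j, Finset.mul_sum]
  refine Finset.sum_congr rfl fun i _ => ?_
  rw [pderiv'_mul ((diff_pderiv' hf i) x) ((diff_pderiv' hf i) x) j]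
  show _ = 2 * (pderiv' f i x * pderiv' (fun y => pderiv' f i y) j x)
  ring

lemma pderiv2_Gamma1 {f : EuclideanSpace ℝ (Fin d) → ℝ} (hf : ContDiff ℝ (⊤:ℕ∞) f)
    (j : Fin d) (x : EuclideanSpace ℝ (Fin d)) :
    pderiv2 (fun y => Gamma1 f f y) j j x
      = 2 * ∑ i, (pderiv2 f j i x)^2
        + 2 * ∑ i, pderiv' f i x * pderiv' (fun y => pderiv2 f j j y) i x := by
  have hdi : ∀ i : Fin d, DifferentiableAt ℝ (fun y => pderiv' f i y * pderiv2 f j i y) x :=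
    fun i => ((diff_pderiv' hf i) x).mul
      (((contDiff_pderiv2 hf j i).differentiable (by norm_cast)) x)
  have hfn : (fun y => pderiv' (fun z => Gamma1 f f z) j y)
      = fun y => 2 * ∑ i, pderiv' f i y * pderiv2 f j i y :=
    funext fun y => pderiv'_Gamma1 hf j y
  show pderiv' (fun y => pderiv' (fun z => Gamma1 f f z) j y) j x = _
  rw [hfn]
  rw [pderiv'_const_mul (DifferentiableAt.fun_sum fun i _ => hdi i) 2 j]
  rw [pderiv'_sum hdi j]
  have key : ∀ i : Fin d, pderiv' (fun y => pderiv' f i y * pderiv2 f j i y) j x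
      = (pderiv2 f j i x)^2 + pderiv' f i x * pderiv' (fun y => pderiv2 f j j y) i x := by
    intro i
    rw [pderiv'_mul ((diff_pderiv' hf i) x)
      (((contDiff_pderiv2 hf j i).differentiable (by norm_cast)) x) j]
    rw [third_symm hf i j x]
    have e : pderiv' (fun y => pderiv' f i y) j x = pderiv2 f j i x := rfl
    rw [e]; ring
  simp only [key]
  rw [Finset.sum_add_distrib]
  ring

lemma pderiv'_genL {π f : EuclideanSpace ℝ (Fin d) → ℝ}
    (hπl : ContDiff ℝ (⊤:ℕ∞) (fun y => Real.log (π y))) (hf : ContDiff ℝ (⊤:ℕ∞) f)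
    (i : Fin d) (x : EuclideanSpace ℝ (Fin d)) :
    pderiv' (fun y => genL π f y) i x
      = (∑ j, (pderiv2 (fun y => Real.log (π y)) i j x * pderiv' f j x
          + pderiv' (fun y => Real.log (π y)) j x * pderiv2 f i j x))
        + ∑ j, pderiv' (fun y => pderiv2 f j j y) i x := by
  have hd1 : ∀ j : Fin d,
      DifferentiableAt ℝ (fun y => pderiv' (fun z => Real.log (π z)) j y * pderiv' f j y) x :=
    fun j => ((diff_pderiv' hπl j) x).mul ((diff_pderiv' hf j) x)
  have hd2 : ∀ j : Fin d, DifferentiableAt ℝ (fun y => pderiv2 f j j y) x :=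
    fun j => ((contDiff_pderiv2 hf j j).differentiable (by norm_cast)) x
  show pderiv' (fun y => (∑ j, pderiv' (fun z => Real.log (π z)) j y * pderiv' f j y)
      + ∑ j, pderiv2 f j j y) i x = _
  rw [pderiv'_add (DifferentiableAt.fun_sum fun j _ => hd1 j) (DifferentiableAt.fun_sum fun j _ => hd2 j) i]
  congr 1
  · rw [pderiv'_sum hd1 i]
    refine Finset.sum_congr rfl fun j _ => ?_
    rw [pderiv'_mul ((diff_pderiv' hπl j) x) ((diff_pderiv' hf j) x) i]
    rfl
  · rw [pderiv'_sum hd2 i]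

lemma sum_algebra (n : ℕ) (P F g : Fin n → ℝ) (H Q U : Fin n → Fin n → ℝ)
    (hH : ∀ i j, H i j = H j i) :
    (1/2 : ℝ) * ((∑ j, P j * (2 * ∑ i, F i * H j i))
        + ∑ j, (2 * ∑ i, (H j i)^2 + 2 * ∑ i, F i * U j i))
      - ∑ i, ((∑ j, (Q i j * F j + P j * H i j)) + ∑ j, U j i) * F i
      + (-(1/2 : ℝ) * (∑ i, g i * (2 * ∑ j, F j * H i j))
        + ((∑ j, P j * F j) + ∑ j, H j j) * (∑ i, F i * g i))
    = (∑ i, ∑ j, (H i j)^2) - (∑ i, ∑ j, Q i j * F i * F j)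
      - (∑ i, g i * ∑ j, H i j * F j) + (∑ i, H i i) * (∑ i, F i * g i)
      + (∑ i, F i * P i) * (∑ i, F i * g i) := by
  have h1 : ∑ j, P j * (2 * ∑ i, F i * H j i) = 2 * ∑ i, ∑ j, P j * H i j * F i := by
    simp only [Finset.mul_sum]
    rw [Finset.sum_comm]
    exact Finset.sum_congr rfl fun i _ => Finset.sum_congr rfl fun j _ => by rw [hH i j]; ring
  have hsplit : ∑ j, ((2:ℝ) * ∑ i, (H j i)^2 + 2 * ∑ i, F i * U j i)
      = 2 * (∑ j, ∑ i, (H j i)^2) + 2 * (∑ j, ∑ i, F i * U j i) := by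
    rw [Finset.sum_add_distrib, ← Finset.mul_sum, ← Finset.mul_sum]
  have h2a : ∑ j, ∑ i, (H j i)^2 = ∑ i, ∑ j, (H i j)^2 := rfl
  have h2b : (∑ j, ∑ i, F i * U j i) = ∑ i, (∑ j, U j i) * F i := by
    rw [Finset.sum_comm]
    exact Finset.sum_congr rfl fun i _ => by
      rw [Finset.sum_mul]
      exact Finset.sum_congr rfl fun j _ => by ring
  have h3 : ∀ i, ((∑ j, (Q i j * F j + P j * H i j)) + ∑ j, U j i) * F i
      = (∑ j, Q i j * F i * F j) + (∑ j, P j * H i j * F i) + (∑ j, U j i) * F i := by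
    intro i
    calc ((∑ j, (Q i j * F j + P j * H i j)) + ∑ j, U j i) * F i
        = ∑ j, ((Q i j * F j + P j * H i j) * F i) + (∑ j, U j i) * F i := by
          rw [add_mul, Finset.sum_mul]
      _ = ∑ j, (Q i j * F i * F j + P j * H i j * F i) + (∑ j, U j i) * F i := by
          refine congrArg (· + _) (Finset.sum_congr rfl fun j _ => by ring)
      _ = (∑ j, Q i j * F i * F j) + (∑ j, P j * H i j * F i) + (∑ j, U j i) * F i := by
          rw [Finset.sum_add_distrib]
  have h4 : ∑ i, g i * (2 * ∑ j, F j * H i j) = 2 * ∑ i, g i * ∑ j, H i j * F j := by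
    rw [Finset.mul_sum]
    refine Finset.sum_congr rfl fun i _ => ?_
    have e : ∑ j, F j * H i j = ∑ j, H i j * F j :=
      Finset.sum_congr rfl fun j _ => mul_comm _ _
    rw [e]
    ring
  have h5 : (∑ j, P j * F j) = ∑ j, F j * P j := Finset.sum_congr rfl fun j _ => by ring
  rw [h1, hsplit, h2a, h2b]
  simp only [h3]
  rw [Finset.sum_add_distrib, Finset.sum_add_distrib, h4, h5]
  ring

end Aux2

/-- Lemma 3.2, first equality: pointwise information Gamma calculus identity. -/
theorem information_gamma_identity_first
    (d : ℕ) (hd : 1 ≤ d)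
    (π : EuclideanSpace ℝ (Fin d) → ℝ) (hπ : ContDiff ℝ (⊤ : ℕ∞) π)
    (hπpos : ∀ x, 0 < π x)
    (γ : EuclideanSpace ℝ (Fin d) → EuclideanSpace ℝ (Fin d))
    (hγ : ContDiff ℝ (⊤ : ℕ∞) γ)
    (f : EuclideanSpace ℝ (Fin d) → ℝ) (hf : ContDiff ℝ (⊤ : ℕ∞) f)
    (x : EuclideanSpace ℝ (Fin d)) :
    Gamma2 π f x + GammaI π γ f x =
      (∑ i, ∑ j, (pderiv2 f i j x) ^ 2)
        - (∑ i, ∑ j, pderiv2 (fun y => Real.log (π y)) i j x * pderiv' f i x * pderiv' f j x)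
        - (∑ i, γ x i * ∑ j, pderiv2 f i j x * pderiv' f j x)
        + lap f x * (∑ i, pderiv' f i x * γ x i)
        + (∑ i, pderiv' f i x * pderiv' (fun y => Real.log (π y)) i x)
            * (∑ i, pderiv' f i x * γ x i) := by
  have hπl : ContDiff ℝ (⊤:ℕ∞) (fun y => Real.log (π y)) :=
    hπ.log (fun y => (hπpos y).ne')
  have hsym : ∀ i j : Fin d, pderiv2 f i j x = pderiv2 f j i x :=
    fun i j => pderiv2_symm hf i j x
  show (1/2 : ℝ) * ((∑ j, pderiv' (fun y => Real.log (π y)) j x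
          * pderiv' (fun y => Gamma1 f f y) j x)
        + ∑ j, pderiv2 (fun y => Gamma1 f f y) j j x)
      - ∑ i, pderiv' (fun y => genL π f y) i x * pderiv' f i x
      + (-(1/2 : ℝ) * (∑ i, γ x i * pderiv' (fun y => Gamma1 f f y) i x)
        + ((∑ j, pderiv' (fun y => Real.log (π y)) j x * pderiv' f j x)
            + ∑ j, pderiv2 f j j x) * (∑ i, pderiv' f i x * γ x i))
      = (∑ i, ∑ j, (pderiv2 f i j x) ^ 2)
        - (∑ i, ∑ j, pderiv2 (fun y => Real.log (π y)) i j x * pderiv' f i x * pderiv' f j x)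
        - (∑ i, γ x i * ∑ j, pderiv2 f i j x * pderiv' f j x)
        + (∑ i, pderiv2 f i i x) * (∑ i, pderiv' f i x * γ x i)
        + (∑ i, pderiv' f i x * pderiv' (fun y => Real.log (π y)) i x)
            * (∑ i, pderiv' f i x * γ x i)
  simp only [pderiv'_Gamma1 hf, pderiv2_Gamma1 hf, pderiv'_genL hπl hf]
  exact sum_algebra d (fun j => pderiv' (fun y => Real.log (π y)) j x)
    (fun i => pderiv' f i x) (fun i => γ x i)
    (fun a b => pderiv2 f a b x)
    (fun a b => pderiv2 (fun y => Real.log (π y)) a b x)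
    (fun a b => pderiv' (fun y => pderiv2 f a a y) b x) hsym


end
end

section
/- Pointwise information Gamma calculus identity (Lemma 3.2, final form): for every smooth function f : ℝ^d → ℝ and every x ∈ ℝ^d, Γ₂(f,f)(x) + Γ_I(f,f)(x) = ‖𝔥ess f(x)‖_F² + Σ_{i,j} ℜ_{ij}(x) ∂f/∂x_i(x) ∂f/∂x_j(x). -/
open MeasureTheory
open scoped BigOperators

noncomputable section

/- ## Auxiliary lemmas -/
namespace IGaux

variable {d : ℕ}

lemma cdiff {f : EuclideanSpace ℝ (Fin d) → ℝ} (hf : ContDiff ℝ (⊤ : ℕ∞) f)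
    (y : EuclideanSpace ℝ (Fin d)) : DifferentiableAt ℝ f y :=
  (hf.differentiable (by simp)) y

lemma contDiff_pderiv' {f : EuclideanSpace ℝ (Fin d) → ℝ} (hf : ContDiff ℝ (⊤ : ℕ∞) f)
    (i : Fin d) : ContDiff ℝ (⊤ : ℕ∞) (pderiv' f i) := by
  have h1 : ContDiff ℝ (⊤ : ℕ∞) (fderiv ℝ f) := (contDiff_infty_iff_fderiv.mp hf).2
  exact (ContinuousLinearMap.apply ℝ ℝ (EuclideanSpace.single i 1)).contDiff.comp h1

lemma pderiv'_fun_add {f g : EuclideanSpace ℝ (Fin d) → ℝ} {x} (i : Fin d)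
    (hf : DifferentiableAt ℝ f x) (hg : DifferentiableAt ℝ g x) :
    pderiv' (fun y => f y + g y) i x = pderiv' f i x + pderiv' g i x := by
  unfold pderiv'
  rw [fderiv_fun_add hf hg]; rfl

lemma pderiv'_fun_mul {f g : EuclideanSpace ℝ (Fin d) → ℝ} {x} (i : Fin d)
    (hf : DifferentiableAt ℝ f x) (hg : DifferentiableAt ℝ g x) :
    pderiv' (fun y => f y * g y) i x = f x * pderiv' g i x + g x * pderiv' f i x := by
  unfold pderiv'
  rw [fderiv_fun_mul hf hg]; simp [smul_eq_mul]

lemma pderiv'_fun_const_mul {f : EuclideanSpace ℝ (Fin d) → ℝ} {x} (i : Fin d) (c : ℝ)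
    (hf : DifferentiableAt ℝ f x) :
    pderiv' (fun y => c * f y) i x = c * pderiv' f i x := by
  unfold pderiv'
  rw [fderiv_const_mul hf]; rfl

lemma pderiv'_fun_sum {ι : Type*} (s : Finset ι) {F : ι → EuclideanSpace ℝ (Fin d) → ℝ} {x}
    (i : Fin d) (hF : ∀ k ∈ s, DifferentiableAt ℝ (F k) x) :
    pderiv' (fun y => ∑ k ∈ s, F k y) i x = ∑ k ∈ s, pderiv' (F k) i x := by
  unfold pderiv'
  rw [fderiv_fun_sum hF]; simp

lemma pderiv2_symm {f : EuclideanSpace ℝ (Fin d) → ℝ} (hf : ContDiff ℝ (⊤ : ℕ∞) f)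
    (i j : Fin d) (x : EuclideanSpace ℝ (Fin d)) :
    pderiv2 f i j x = pderiv2 f j i x := by
  have hd : ContDiff ℝ (⊤ : ℕ∞) (fderiv ℝ f) := (contDiff_infty_iff_fderiv.mp hf).2
  have key : ∀ a b : Fin d, pderiv2 f a b x
      = fderiv ℝ (fderiv ℝ f) x (EuclideanSpace.single a 1) (EuclideanSpace.single b 1) := by
    intro a b
    unfold pderiv2 pderiv'
    rw [fderiv_clm_apply (hd.differentiable (by simp) x) (differentiableAt_const _)]
    simp
  rw [key, key]
  exact (hf.contDiffAt.isSymmSndFDerivAt (by simp; exact WithTop.coe_le_coe.mpr (le_top : (2 : ℕ∞) ≤ ⊤))) _ _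

lemma sum_sq_ite (i : Fin d) (a : Fin d → ℝ) (c : ℝ) :
    ∑ j, (a j + (if i = j then c else 0))^2 = (∑ j, (a j)^2) + (2 * a i * c + c^2) := by
  have h : ∀ j, (a j + (if i = j then c else 0))^2
      = (a j)^2 + (if i = j then 2 * a j * c + c^2 else 0) := by
    intro j; by_cases h : i = j
    · subst h; simp only [eq_self_iff_true, if_true]; ring
    · simp only [if_neg h]; ring
  simp only [h]
  rw [Finset.sum_add_distrib, Finset.sum_ite_eq, if_pos (Finset.mem_univ i)]

lemma sum_ite_lin (i : Fin d) (b : Fin d → ℝ) (e : ℝ) (Fi : ℝ) (F : Fin d → ℝ) :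
    ∑ j, (b j + (if i = j then e else 0)) * Fi * F j
      = (∑ j, b j * Fi * F j) + e * Fi * F i := by
  have h : ∀ j, (b j + (if i = j then e else 0)) * Fi * F j
      = b j * Fi * F j + (if i = j then e * Fi * F j else 0) := by
    intro j; by_cases h : i = j
    · simp only [if_pos h]; ring
    · simp only [if_neg h]; ring
  simp only [h]
  rw [Finset.sum_add_distrib, Finset.sum_ite_eq, if_pos (Finset.mem_univ i)]

lemma mul_dsum (c : ℝ) (m : Fin d → Fin d → ℝ) :
    ∑ i, ∑ j, c * m i j = c * ∑ i, ∑ j, m i j := by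
  rw [Finset.mul_sum]
  exact Finset.sum_congr rfl fun i _ => (Finset.mul_sum _ _ _).symm

lemma key_algebra (d : ℕ) (F G U : Fin d → ℝ) (H U2 T T' : Fin d → Fin d → ℝ)
    (Hsym : ∀ i j, H i j = H j i)
    (hT : ∑ i, ∑ k, F k * T i k = ∑ i, F i * ∑ k, T' i k) :
    (1/2 : ℝ) * ((∑ i, U i * (2 * ∑ k, F k * H i k))
        + ∑ i, 2 * ∑ k, (H i k * H i k + F k * T i k))
      - (∑ i, (((∑ k, (U2 i k * F k + U k * H i k)) + ∑ k, T' i k) * F i))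
      + (-(1/2 : ℝ) * (∑ i, G i * (2 * ∑ k, F k * H i k))
         + ((∑ k, U k * F k) + ∑ k, H k k) * (∑ i, F i * G i))
    = (∑ i, ∑ j, ((H i j - (1/4 : ℝ) * (G i * F j + G j * F i))
          + (if i = j then (1/2 : ℝ) * ∑ k, G k * F k else 0))^2)
      + ∑ i, ∑ j, ((-U2 i j + ((3 - 2*(d:ℝ))/8) * G i * G j
          - (1/8 : ℝ) * (if i = j then ∑ k, (G k)^2 else 0)
          + (1/2 : ℝ) * (G i * U j + G j * U i)) * F i * F j) := by
  have swap : ∀ m : Fin d → Fin d → ℝ, ∑ i, ∑ j, m i j = ∑ i, ∑ j, m j i :=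
    fun m => Finset.sum_comm
  -- fusions
  have f1 : ∑ i, ∑ j, (G i)^2 * (F j)^2 = (∑ k, (G k)^2) * (∑ k, (F k)^2) :=
    (Finset.sum_mul_sum _ _ _ _).symm
  have f2 : ∑ i, ∑ j, (G i * F i) * (G j * F j) = (∑ k, G k * F k) * (∑ k, G k * F k) :=
    (Finset.sum_mul_sum _ _ _ _).symm
  have f3 : ∑ i, ∑ j, (G j)^2 * (F i)^2 = (∑ k, (G k)^2) * (∑ k, (F k)^2) := by
    rw [swap (fun i j => (G j)^2 * (F i)^2)]; exact f1
  have f4 : ∑ i, ∑ j, G j * F i * H i j = ∑ i, ∑ j, G i * F j * H i j := by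
    rw [swap (fun i j => G j * F i * H i j)]
    exact Finset.sum_congr rfl fun i _ => Finset.sum_congr rfl fun j _ => by
      rw [Hsym j i]
  have f5 : ∑ i, ∑ j, (G i * F i) * (U j * F j) = (∑ k, G k * F k) * (∑ k, U k * F k) :=
    (Finset.sum_mul_sum _ _ _ _).symm
  have f6 : ∑ i, ∑ j, (U i * F i) * (G j * F j) = (∑ k, U k * F k) * (∑ k, G k * F k) :=
    (Finset.sum_mul_sum _ _ _ _).symm
  -- LHS pieces
  have p1 : (∑ i, U i * (2 * ∑ k, F k * H i k)) = 2 * ∑ i, ∑ k, U i * F k * H i k := by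
    rw [← mul_dsum]
    refine Finset.sum_congr rfl fun i _ => ?_
    rw [show U i * (2 * ∑ k, F k * H i k) = (2 * U i) * ∑ k, F k * H i k from by ring,
      Finset.mul_sum]
    exact Finset.sum_congr rfl fun k _ => by ring
  have p2 : (∑ i, 2 * ∑ k, (H i k * H i k + F k * T i k))
      = 2 * (∑ i, ∑ k, H i k * H i k) + 2 * ∑ i, ∑ k, F k * T i k := by
    have h : ∀ i : Fin d, 2 * ∑ k, (H i k * H i k + F k * T i k)
        = (∑ k, 2 * (H i k * H i k)) + ∑ k, 2 * (F k * T i k) := by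
      intro i
      rw [← Finset.sum_add_distrib, Finset.mul_sum]
      exact Finset.sum_congr rfl fun k _ => by ring
    simp only [h]
    rw [Finset.sum_add_distrib, mul_dsum, mul_dsum]
  have p3 : (∑ i, (((∑ k, (U2 i k * F k + U k * H i k)) + ∑ k, T' i k) * F i))
      = (∑ i, ∑ j, U2 i j * F i * F j) + (∑ i, ∑ j, U i * F j * H i j)
        + ∑ i, F i * ∑ k, T' i k := by
    have h : ∀ i : Fin d, ((∑ k, (U2 i k * F k + U k * H i k)) + ∑ k, T' i k) * F i
        = (∑ k, U2 i k * F i * F k) + (∑ k, U k * H i k * F i) + F i * ∑ k, T' i k := by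
      intro i
      rw [Finset.sum_add_distrib, add_mul, add_mul, Finset.sum_mul, Finset.sum_mul,
        mul_comm (∑ k, T' i k) (F i)]
      congr 1
      congr 1
      exact Finset.sum_congr rfl fun k _ => by ring
    simp only [h]
    rw [Finset.sum_add_distrib, Finset.sum_add_distrib]
    congr 1
    congr 1
    rw [swap (fun i j => U i * F j * H i j)]
    exact Finset.sum_congr rfl fun i _ => Finset.sum_congr rfl fun j _ => by
      rw [Hsym i j]; ring
  have p4 : (∑ i, G i * (2 * ∑ k, F k * H i k)) = 2 * ∑ i, ∑ k, G i * F k * H i k := by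
    rw [← mul_dsum]
    refine Finset.sum_congr rfl fun i _ => ?_
    rw [show G i * (2 * ∑ k, F k * H i k) = (2 * G i) * ∑ k, F k * H i k from by ring,
      Finset.mul_sum]
    exact Finset.sum_congr rfl fun k _ => by ring
  have p5 : (∑ i, F i * G i) = ∑ k, G k * F k :=
    Finset.sum_congr rfl fun i _ => by ring
  -- RHS Frobenius square
  have q1 : (∑ i, ∑ j, ((H i j - (1/4 : ℝ) * (G i * F j + G j * F i))
          + (if i = j then (1/2 : ℝ) * ∑ k, G k * F k else 0))^2)
      = ((∑ i, ∑ j, H i j * H i j) - (∑ i, ∑ j, G i * F j * H i j)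
        + (1/8 : ℝ) * ((∑ k, (G k)^2) * (∑ k, (F k)^2))
        + (1/8 : ℝ) * ((∑ k, G k * F k) * (∑ k, G k * F k)))
        + ((∑ k, G k * F k) * (∑ k, H k k)
            - (1/2 : ℝ) * ((∑ k, G k * F k) * (∑ k, G k * F k))
            + (d : ℝ) * ((1/4 : ℝ) * ((∑ k, G k * F k) * (∑ k, G k * F k)))) := by
    have step1 : ∀ i : Fin d, (∑ j, ((H i j - (1/4 : ℝ) * (G i * F j + G j * F i))
          + (if i = j then (1/2 : ℝ) * ∑ k, G k * F k else 0))^2)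
        = (∑ j, (H i j - (1/4 : ℝ) * (G i * F j + G j * F i))^2)
          + (2 * (H i i - (1/4 : ℝ) * (G i * F i + G i * F i))
              * ((1/2 : ℝ) * ∑ k, G k * F k)
            + ((1/2 : ℝ) * ∑ k, G k * F k)^2) := fun i =>
      sum_sq_ite i (fun j => H i j - (1/4 : ℝ) * (G i * F j + G j * F i)) _
    simp only [step1]
    rw [Finset.sum_add_distrib]
    congr 1
    · -- off-ite part
      have t1 : ∀ i j : Fin d, (H i j - (1/4 : ℝ) * (G i * F j + G j * F i))^2
          = H i j * H i j - (1/2 : ℝ) * (G i * F j * H i j)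
            - (1/2 : ℝ) * (G j * F i * H i j)
            + (1/16 : ℝ) * ((G i)^2 * (F j)^2)
            + (1/8 : ℝ) * ((G i * F i) * (G j * F j))
            + (1/16 : ℝ) * ((G j)^2 * (F i)^2) := fun i j => by ring
      calc (∑ i, ∑ j, (H i j - (1/4 : ℝ) * (G i * F j + G j * F i))^2)
          = ∑ i, ∑ j, (H i j * H i j - (1/2 : ℝ) * (G i * F j * H i j)
            - (1/2 : ℝ) * (G j * F i * H i j)
            + (1/16 : ℝ) * ((G i)^2 * (F j)^2)
            + (1/8 : ℝ) * ((G i * F i) * (G j * F j))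
            + (1/16 : ℝ) * ((G j)^2 * (F i)^2)) :=
            Finset.sum_congr rfl fun i _ => Finset.sum_congr rfl fun j _ => t1 i j
        _ = (∑ i, ∑ j, H i j * H i j) - (∑ i, ∑ j, (1/2 : ℝ) * (G i * F j * H i j))
            - (∑ i, ∑ j, (1/2 : ℝ) * (G j * F i * H i j))
            + (∑ i, ∑ j, (1/16 : ℝ) * ((G i)^2 * (F j)^2))
            + (∑ i, ∑ j, (1/8 : ℝ) * ((G i * F i) * (G j * F j)))
            + (∑ i, ∑ j, (1/16 : ℝ) * ((G j)^2 * (F i)^2)) := by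
            simp only [Finset.sum_add_distrib, Finset.sum_sub_distrib]
        _ = _ := by
            rw [mul_dsum, mul_dsum, mul_dsum, mul_dsum, mul_dsum, f1, f2, f3, f4]
            ring
    · -- diag ite part
      have t2 : ∀ i : Fin d, (2 * (H i i - (1/4 : ℝ) * (G i * F i + G i * F i))
              * ((1/2 : ℝ) * ∑ k, G k * F k)
            + ((1/2 : ℝ) * ∑ k, G k * F k)^2)
          = (∑ k, G k * F k) * H i i
            - ((1/2 : ℝ) * ∑ k, G k * F k) * (G i * F i)
            + (1/4 : ℝ) * ((∑ k, G k * F k) * (∑ k, G k * F k)) := fun i => by ring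
      simp only [t2]
      rw [Finset.sum_add_distrib, Finset.sum_sub_distrib, ← Finset.mul_sum, ← Finset.mul_sum,
        Finset.sum_const, Finset.card_univ, Fintype.card_fin, nsmul_eq_mul]
      ring
  -- RHS Rtensor part
  have q2 : (∑ i, ∑ j, ((-U2 i j + ((3 - 2*(d:ℝ))/8) * G i * G j
          - (1/8 : ℝ) * (if i = j then ∑ k, (G k)^2 else 0)
          + (1/2 : ℝ) * (G i * U j + G j * U i)) * F i * F j))
      = -(∑ i, ∑ j, U2 i j * F i * F j)
        + ((3 - 2*(d:ℝ))/8) * ((∑ k, G k * F k) * (∑ k, G k * F k))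
        + (1/2 : ℝ) * ((∑ k, G k * F k) * (∑ k, U k * F k))
        + (1/2 : ℝ) * ((∑ k, U k * F k) * (∑ k, G k * F k))
        - (1/8 : ℝ) * ((∑ k, (G k)^2) * (∑ k, (F k)^2)) := by
    have t3 : ∀ i j : Fin d, ((-U2 i j + ((3 - 2*(d:ℝ))/8) * G i * G j
          - (1/8 : ℝ) * (if i = j then ∑ k, (G k)^2 else 0)
          + (1/2 : ℝ) * (G i * U j + G j * U i)) * F i * F j)
        = (((-U2 i j + ((3 - 2*(d:ℝ))/8) * G i * G j
            + (1/2 : ℝ) * (G i * U j + G j * U i))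
          + (if i = j then -(1/8 : ℝ) * ∑ k, (G k)^2 else 0)) * F i * F j) := by
      intro i j; by_cases h : i = j
      · simp only [if_pos h]; ring
      · simp only [if_neg h]; ring
    simp only [t3]
    have step2 : ∀ i : Fin d, (∑ j, (((-U2 i j + ((3 - 2*(d:ℝ))/8) * G i * G j
            + (1/2 : ℝ) * (G i * U j + G j * U i))
          + (if i = j then -(1/8 : ℝ) * ∑ k, (G k)^2 else 0)) * F i * F j))
        = (∑ j, (-U2 i j + ((3 - 2*(d:ℝ))/8) * G i * G j
            + (1/2 : ℝ) * (G i * U j + G j * U i)) * F i * F j)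
          + (-(1/8 : ℝ) * ∑ k, (G k)^2) * F i * F i := fun i =>
      sum_ite_lin i _ _ _ _
    simp only [step2]
    rw [Finset.sum_add_distrib]
    have t4 : ∀ i j : Fin d, ((-U2 i j + ((3 - 2*(d:ℝ))/8) * G i * G j
            + (1/2 : ℝ) * (G i * U j + G j * U i)) * F i * F j)
        = -(U2 i j * F i * F j) + ((3 - 2*(d:ℝ))/8) * ((G i * F i) * (G j * F j))
          + (1/2 : ℝ) * ((G i * F i) * (U j * F j))
          + (1/2 : ℝ) * ((U i * F i) * (G j * F j)) := fun i j => by ring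
    have t5 : ∀ i : Fin d, (-(1/8 : ℝ) * ∑ k, (G k)^2) * F i * F i
        = (-(1/8 : ℝ) * ∑ k, (G k)^2) * ((F i)^2) := fun i => by ring
    simp only [t4, t5]
    rw [← Finset.mul_sum]
    simp only [Finset.sum_add_distrib]
    have hn : ∑ i, ∑ j, -(U2 i j * F i * F j) = -(∑ i, ∑ j, U2 i j * F i * F j) := by
      simp only [Finset.sum_neg_distrib]
    rw [hn, mul_dsum, mul_dsum, mul_dsum, f2, f5, f6]
    ring
  rw [p1, p2, p3, p4, p5, q1, q2]
  linear_combination hT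

end IGaux


/-- Lemma 3.2, final form: `Γ₂(f,f) + Γ_I(f,f) = ‖𝔥ess f‖_F² + ℜ(∇f, ∇f)` pointwise. -/
theorem information_gamma_identity_final
    (d : ℕ) (hd : 1 ≤ d)
    (π : EuclideanSpace ℝ (Fin d) → ℝ) (hπ : ContDiff ℝ (⊤ : ℕ∞) π)
    (hπpos : ∀ x, 0 < π x)
    (γ : EuclideanSpace ℝ (Fin d) → EuclideanSpace ℝ (Fin d))
    (hγ : ContDiff ℝ (⊤ : ℕ∞) γ)
    (f : EuclideanSpace ℝ (Fin d) → ℝ) (hf : ContDiff ℝ (⊤ : ℕ∞) f)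
    (x : EuclideanSpace ℝ (Fin d)) :
    Gamma2 π f x + GammaI π γ f x =
      (∑ i, ∑ j, (hessM γ f i j x) ^ 2)
        + ∑ i, ∑ j, Rtensor π γ i j x * pderiv' f i x * pderiv' f j x := by
  classical
  have hu : ContDiff ℝ (⊤ : ℕ∞) (fun y => Real.log (π y)) := by
    rw [contDiff_iff_contDiffAt]
    intro y
    exact (Real.contDiffAt_log.mpr (hπpos y).ne').comp y hπ.contDiffAt
  have hg : ∀ k, ContDiff ℝ (⊤ : ℕ∞) (pderiv' f k) := fun k => IGaux.contDiff_pderiv' hf k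
  have hgg : ∀ i k, ContDiff ℝ (⊤ : ℕ∞) (pderiv' (pderiv' f k) i) :=
    fun i k => IGaux.contDiff_pderiv' (hg k) i
  have hU : ∀ k, ContDiff ℝ (⊤ : ℕ∞) (pderiv' (fun y => Real.log (π y)) k) :=
    fun k => IGaux.contDiff_pderiv' hu k
  -- first derivative of Γ₁(f,f)
  have D1 : ∀ (i : Fin d) (y), pderiv' (fun z => Gamma1 f f z) i y
      = 2 * ∑ k, pderiv' f k y * pderiv2 f i k y := by
    intro i y
    have e : (fun z => Gamma1 f f z) = fun z => ∑ k, pderiv' f k z * pderiv' f k z := rfl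
    rw [e, IGaux.pderiv'_fun_sum (F := fun k z => pderiv' f k z * pderiv' f k z) Finset.univ i
      (fun k _ => (IGaux.cdiff (hg k) y).mul (IGaux.cdiff (hg k) y)), Finset.mul_sum]
    refine Finset.sum_congr rfl fun k _ => ?_
    rw [IGaux.pderiv'_fun_mul i (IGaux.cdiff (hg k) y) (IGaux.cdiff (hg k) y)]
    rw [show pderiv' (fun z => pderiv' f k z) i y = pderiv2 f i k y from rfl]
    ring
  -- second derivative of Γ₁(f,f)
  have D2 : ∀ i : Fin d, pderiv2 (fun z => Gamma1 f f z) i i x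
      = 2 * ∑ k, (pderiv2 f i k x * pderiv2 f i k x
          + pderiv' f k x * pderiv' (fun y => pderiv2 f i k y) i x) := by
    intro i
    have e : pderiv2 (fun z => Gamma1 f f z) i i x
        = pderiv' (fun y => 2 * ∑ k, pderiv' f k y * pderiv2 f i k y) i x := by
      show pderiv' (fun y => pderiv' (fun z => Gamma1 f f z) i y) i x = _
      congr 1
      funext y
      exact D1 i y
    have hsum : DifferentiableAt ℝ (fun y => ∑ k, pderiv' f k y * pderiv2 f i k y) x :=
      DifferentiableAt.fun_sum fun k _ => (IGaux.cdiff (hg k) x).mul (IGaux.cdiff (hgg i k) x)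
    rw [e, IGaux.pderiv'_fun_const_mul i 2 hsum,
      IGaux.pderiv'_fun_sum (F := fun k y => pderiv' f k y * pderiv2 f i k y) Finset.univ i
        (fun k _ => (IGaux.cdiff (hg k) x).mul (IGaux.cdiff (hgg i k) x))]
    congr 1
    refine Finset.sum_congr rfl fun k _ => ?_
    rw [IGaux.pderiv'_fun_mul (f := fun y => pderiv' f k y) (g := fun y => pderiv2 f i k y) i
      (IGaux.cdiff (hg k) x) (IGaux.cdiff (hgg i k) x)]
    rw [show pderiv' (fun y => pderiv' f k y) i x = pderiv2 f i k x from rfl]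
    ring
  -- derivative of L̃f
  have D3 : ∀ i : Fin d, pderiv' (fun y => genL π f y) i x
      = (∑ k, (pderiv2 (fun y => Real.log (π y)) i k x * pderiv' f k x
          + pderiv' (fun y => Real.log (π y)) k x * pderiv2 f i k x))
        + ∑ k, pderiv' (fun y => pderiv2 f k k y) i x := by
    intro i
    have e : (fun y => genL π f y)
        = fun y => (∑ k, pderiv' (fun z => Real.log (π z)) k y * pderiv' f k y)
            + ∑ k, pderiv2 f k k y := rfl
    have h1 : DifferentiableAt ℝ
        (fun y => ∑ k, pderiv' (fun z => Real.log (π z)) k y * pderiv' f k y) x :=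
      DifferentiableAt.fun_sum fun k _ => (IGaux.cdiff (hU k) x).mul (IGaux.cdiff (hg k) x)
    have h2 : DifferentiableAt ℝ (fun y => ∑ k, pderiv2 f k k y) x :=
      DifferentiableAt.fun_sum fun k _ => IGaux.cdiff (hgg k k) x
    rw [e, IGaux.pderiv'_fun_add i h1 h2,
      IGaux.pderiv'_fun_sum
        (F := fun k y => pderiv' (fun z => Real.log (π z)) k y * pderiv' f k y) Finset.univ i
        (fun k _ => (IGaux.cdiff (hU k) x).mul (IGaux.cdiff (hg k) x)),
      IGaux.pderiv'_fun_sum (F := fun k y => pderiv2 f k k y) Finset.univ i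
        (fun k _ => IGaux.cdiff (hgg k k) x)]
    congr 1
    refine Finset.sum_congr rfl fun k _ => ?_
    rw [IGaux.pderiv'_fun_mul (f := fun y => pderiv' (fun z => Real.log (π z)) k y)
      (g := fun y => pderiv' f k y) i (IGaux.cdiff (hU k) x) (IGaux.cdiff (hg k) x)]
    rw [show pderiv' (fun y => pderiv' f k y) i x = pderiv2 f i k x from rfl,
      show pderiv' (fun y => pderiv' (fun z => Real.log (π z)) k y) i x
        = pderiv2 (fun z => Real.log (π z)) i k x from rfl]
    ring
  have genLx : genL π f x
      = (∑ k, pderiv' (fun y => Real.log (π y)) k x * pderiv' f k x)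
        + ∑ k, pderiv2 f k k x := rfl
  -- symmetry of the Hessian of f
  have Hsymf : ∀ i j : Fin d, pderiv2 f i j x = pderiv2 f j i x :=
    fun i j => IGaux.pderiv2_symm hf i j x
  -- third-order symmetry (cancellation of third derivatives)
  have hR3 : ∀ i k : Fin d, pderiv' (fun y => pderiv2 f k k y) i x
      = pderiv2 (pderiv' f i) k k x := by
    intro i k
    have e1 : pderiv' (fun y => pderiv2 f k k y) i x = pderiv2 (pderiv' f k) i k x := rfl
    rw [e1, IGaux.pderiv2_symm (hg k) i k x]
    have e2 : pderiv2 (pderiv' f k) k i x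
        = pderiv' (fun y => pderiv' (pderiv' f k) i y) k x := rfl
    rw [e2]
    have e3 : (fun y => pderiv' (pderiv' f k) i y) = fun y => pderiv' (pderiv' f i) k y := by
      funext y
      exact IGaux.pderiv2_symm hf i k y
    rw [e3]
    rfl
  have hT : ∑ i, ∑ k, pderiv' f k x * pderiv' (fun y => pderiv2 f i k y) i x
      = ∑ i, pderiv' f i x * ∑ k, pderiv' (fun y => pderiv2 f k k y) i x := by
    rw [Finset.sum_comm]
    refine Finset.sum_congr rfl fun k _ => ?_
    rw [Finset.mul_sum]
    refine Finset.sum_congr rfl fun i _ => ?_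
    rw [hR3 k i]
    rfl
  -- rewrite hessM and Rtensor
  have hH : ∀ i j : Fin d, hessM γ f i j x
      = (pderiv2 f i j x - (1/4 : ℝ) * (γ x i * pderiv' f j x + γ x j * pderiv' f i x))
        + (if i = j then (1/2 : ℝ) * ∑ k, γ x k * pderiv' f k x else 0) := by
    intro i j; by_cases h : i = j
    · subst h; simp only [hessM, eq_self_iff_true, if_true]; ring
    · simp only [hessM, if_neg h]; ring
  have hRt : ∀ i j : Fin d, Rtensor π γ i j x
      = -pderiv2 (fun y => Real.log (π y)) i j x
        + ((3 - 2*(d:ℝ))/8) * γ x i * γ x j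
        - (1/8 : ℝ) * (if i = j then ∑ k, (γ x k)^2 else 0)
        + (1/2 : ℝ) * (γ x i * pderiv' (fun y => Real.log (π y)) j x
            + γ x j * pderiv' (fun y => Real.log (π y)) i x) := fun i j => rfl
  -- reduce the LHS to explicit sums
  have lhs_eq : Gamma2 π f x + GammaI π γ f x
      = (1/2 : ℝ) * ((∑ i, pderiv' (fun y => Real.log (π y)) i x
              * (2 * ∑ k, pderiv' f k x * pderiv2 f i k x))
          + ∑ i, 2 * ∑ k, (pderiv2 f i k x * pderiv2 f i k x
              + pderiv' f k x * pderiv' (fun y => pderiv2 f i k y) i x))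
        - (∑ i, (((∑ k, (pderiv2 (fun y => Real.log (π y)) i k x * pderiv' f k x
              + pderiv' (fun y => Real.log (π y)) k x * pderiv2 f i k x))
            + ∑ k, pderiv' (fun y => pderiv2 f k k y) i x) * pderiv' f i x))
        + (-(1/2 : ℝ) * (∑ i, γ x i * (2 * ∑ k, pderiv' f k x * pderiv2 f i k x))
           + ((∑ k, pderiv' (fun y => Real.log (π y)) k x * pderiv' f k x)
              + ∑ k, pderiv2 f k k x) * (∑ i, pderiv' f i x * γ x i)) := by
    have h1 : genL π (fun y => Gamma1 f f y) x
        = (∑ i, pderiv' (fun y => Real.log (π y)) i x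
            * (2 * ∑ k, pderiv' f k x * pderiv2 f i k x))
          + ∑ i, 2 * ∑ k, (pderiv2 f i k x * pderiv2 f i k x
              + pderiv' f k x * pderiv' (fun y => pderiv2 f i k y) i x) := by
      show (∑ i, pderiv' (fun y => Real.log (π y)) i x
            * pderiv' (fun y => Gamma1 f f y) i x)
          + (∑ i, pderiv2 (fun y => Gamma1 f f y) i i x) = _
      congr 1
      · exact Finset.sum_congr rfl fun i _ => by rw [D1 i x]
      · exact Finset.sum_congr rfl fun i _ => D2 i
    have h2 : Gamma1 (fun y => genL π f y) f x
        = ∑ i, (((∑ k, (pderiv2 (fun y => Real.log (π y)) i k x * pderiv' f k x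
              + pderiv' (fun y => Real.log (π y)) k x * pderiv2 f i k x))
            + ∑ k, pderiv' (fun y => pderiv2 f k k y) i x) * pderiv' f i x) := by
      show (∑ i, pderiv' (fun y => genL π f y) i x * pderiv' f i x) = _
      exact Finset.sum_congr rfl fun i _ => by rw [D3 i]
    have h3 : (∑ i, γ x i * pderiv' (fun y => Gamma1 f f y) i x)
        = ∑ i, γ x i * (2 * ∑ k, pderiv' f k x * pderiv2 f i k x) :=
      Finset.sum_congr rfl fun i _ => by rw [D1 i x]
    show ((1/2 : ℝ) * genL π (fun y => Gamma1 f f y) x - Gamma1 (fun y => genL π f y) f x)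
        + (-(1/2 : ℝ) * (∑ i, γ x i * pderiv' (fun y => Gamma1 f f y) i x)
          + genL π f x * (∑ i, pderiv' f i x * γ x i)) = _
    rw [h1, h2, h3, genLx]
  have rhs_eq : (∑ i, ∑ j, (hessM γ f i j x) ^ 2)
        + (∑ i, ∑ j, Rtensor π γ i j x * pderiv' f i x * pderiv' f j x)
      = (∑ i, ∑ j, ((pderiv2 f i j x
            - (1/4 : ℝ) * (γ x i * pderiv' f j x + γ x j * pderiv' f i x))
          + (if i = j then (1/2 : ℝ) * ∑ k, γ x k * pderiv' f k x else 0))^2)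
        + ∑ i, ∑ j, ((-pderiv2 (fun y => Real.log (π y)) i j x
            + ((3 - 2*(d:ℝ))/8) * γ x i * γ x j
            - (1/8 : ℝ) * (if i = j then ∑ k, (γ x k)^2 else 0)
            + (1/2 : ℝ) * (γ x i * pderiv' (fun y => Real.log (π y)) j x
                + γ x j * pderiv' (fun y => Real.log (π y)) i x))
          * pderiv' f i x * pderiv' f j x) := by
    have h1 := hRt
    congr 1
    exact Finset.sum_congr rfl fun i _ => Finset.sum_congr rfl fun j _ => by rw [hH i j]
  rw [lhs_eq, rhs_eq]
  exact IGaux.key_algebra d (fun i => pderiv' f i x) (fun i => γ x i)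
    (fun k => pderiv' (fun y => Real.log (π y)) k x)
    (fun i j => pderiv2 f i j x)
    (fun i j => pderiv2 (fun y => Real.log (π y)) i j x)
    (fun i k => pderiv' (fun y => pderiv2 f i k y) i x)
    (fun i k => pderiv' (fun y => pderiv2 f k k y) i x)
    Hsymf hT


end
end

section
/- Completing-the-square linear algebra identity underlying the information Gamma calculus: let d ≥ 1, let H, M ∈ ℝ^{d×d} be symmetric matrices and v, g, u ∈ ℝ^d. Define the matrix 𝔥 ∈ ℝ^{d×d} by 𝔥_{ii} = H_{ii} + ½⟨g, v⟩ − ½ g_i v_i and, for i ≠ j, 𝔥_{ij} = H_{ij} − ¼(g_i v_j + g_j v_i), and the matrix R ∈ ℝ^{d×d} by R_{ij} = −M_{ij} + ((3−2d)/8) g_i g_j − (1/8) δ_{ij} ‖g‖² + ½(g_i u_j + g_j u_i). Then ‖H‖_F² − ⟨M v, v⟩ − ⟨g, H v⟩ + (tr H)·⟨v, g⟩ + ⟨v, u⟩·⟨v, g⟩ = ‖𝔥‖_F² + ⟨R v, v⟩. -/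
open scoped BigOperators

private lemma sum_pull {n : ℕ} (c : ℝ) {F f : Fin n → ℝ} (h : ∀ j, F j = c * f j) :
    (∑ j, F j) = c * ∑ j, f j := by
  rw [Finset.mul_sum]; exact Finset.sum_congr rfl fun j _ => h j

private lemma sum_pull' {n : ℕ} (c : ℝ) {F f : Fin n → ℝ} (h : ∀ j, F j = f j * c) :
    (∑ j, F j) = (∑ j, f j) * c := by
  rw [Finset.sum_mul]; exact Finset.sum_congr rfl fun j _ => h j

private lemma sum_diag {n : ℕ} (i : Fin n) (f : Fin n → ℝ) :
    (∑ j, if i = j then f j else 0) = f i := by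
  rw [Finset.sum_ite_eq]; exact if_pos (Finset.mem_univ i)

/-- Completing-the-square linear algebra identity underlying the information
Gamma calculus: with `𝔥` and `R` built from symmetric matrices `H`, `M` and
vectors `v`, `g`, `u`,
`‖H‖_F² − ⟨M v, v⟩ − ⟨g, H v⟩ + (tr H)⟨v, g⟩ + ⟨v, u⟩⟨v, g⟩ = ‖𝔥‖_F² + ⟨R v, v⟩`. -/
theorem completing_the_square_identity
    (d : ℕ) (hd : 1 ≤ d)
    (H M : Matrix (Fin d) (Fin d) ℝ) (hH : H.IsSymm) (hM : M.IsSymm)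
    (v g u : Fin d → ℝ)
    (𝔥 R : Matrix (Fin d) (Fin d) ℝ)
    (h𝔥 : ∀ i j, 𝔥 i j =
      if i = j then
        H i i + (1/2 : ℝ) * (∑ k, g k * v k) - (1/2 : ℝ) * g i * v i
      else
        H i j - (1/4 : ℝ) * (g i * v j + g j * v i))
    (hR : ∀ i j, R i j =
      -M i j + ((3 - 2 * (d : ℝ)) / 8) * g i * g j
        - (1/8 : ℝ) * (if i = j then ∑ k, (g k) ^ 2 else 0)
        + (1/2 : ℝ) * (g i * u j + g j * u i)) :
    (∑ i, ∑ j, (H i j) ^ 2) - (∑ i, ∑ j, M i j * v i * v j)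
        - (∑ i, g i * ∑ j, H i j * v j)
        + Matrix.trace H * (∑ i, v i * g i)
        + (∑ i, v i * u i) * (∑ i, v i * g i) =
      (∑ i, ∑ j, (𝔥 i j) ^ 2) + ∑ i, ∑ j, R i j * v i * v j := by
  classical
  have hT : Matrix.trace H = ∑ i, H i i := rfl
  -- symmetry swap
  have swap : (∑ i, ∑ j, H i j * (g j * v i)) = ∑ i, ∑ j, H i j * (g i * v j) := by
    rw [Finset.sum_comm]
    refine Finset.sum_congr rfl fun a _ => Finset.sum_congr rfl fun b _ => ?_
    rw [hH.apply a b]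
  -- inner sums for 𝔥
  have inner𝔥 : ∀ i, (∑ j, (𝔥 i j)^2) =
      (∑ j, (H i j)^2)
      - (1/2) * (∑ j, H i j * (g i * v j))
      - (1/2) * (∑ j, H i j * (g j * v i))
      + (1/16 * (g i)^2) * (∑ k, (v k)^2)
      + (1/8 * (g i * v i)) * (∑ k, g k * v k)
      + (1/16 * (v i)^2) * (∑ k, (g k)^2)
      + ((∑ k, g k * v k)^2/4 + (∑ k, g k * v k) * H i i
          - ((∑ k, g k * v k)/2) * (g i * v i)) := by
    intro i
    have key : ∀ j, (𝔥 i j)^2 =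
        ((H i j)^2 - (1/2)*(H i j * (g i * v j)) - (1/2)*(H i j * (g j * v i))
         + (1/16 * (g i)^2) * (v j)^2 + (1/8 * (g i * v i)) * (g j * v j)
         + (1/16 * (v i)^2) * (g j)^2)
        + (if i = j then (∑ k, g k * v k)^2/4 + (∑ k, g k * v k) * H i i
            - ((∑ k, g k * v k)/2)*(g i * v i) else 0) := by
      intro j
      rw [h𝔥]
      by_cases h : i = j
      · subst h; rw [if_pos rfl, if_pos rfl]; ring
      · rw [if_neg h, if_neg h]; ring
    rw [Finset.sum_congr rfl fun j _ => key j, Finset.sum_add_distrib, sum_diag]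
    have c1 : (∑ j, (1/2:ℝ)*(H i j * (g i * v j))) = (1/2) * ∑ j, H i j * (g i * v j) :=
      sum_pull _ fun j => rfl
    have c2 : (∑ j, (1/2:ℝ)*(H i j * (g j * v i))) = (1/2) * ∑ j, H i j * (g j * v i) :=
      sum_pull _ fun j => rfl
    have c3 : (∑ j, ((1:ℝ)/16 * (g i)^2) * (v j)^2) = (1/16 * (g i)^2) * ∑ k, (v k)^2 :=
      sum_pull _ fun j => rfl
    have c4 : (∑ j, ((1:ℝ)/8 * (g i * v i)) * (g j * v j))
        = (1/8 * (g i * v i)) * ∑ k, g k * v k := sum_pull _ fun j => rfl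
    have c5 : (∑ j, ((1:ℝ)/16 * (v i)^2) * (g j)^2) = (1/16 * (v i)^2) * ∑ k, (g k)^2 :=
      sum_pull _ fun j => rfl
    simp only [Finset.sum_add_distrib, Finset.sum_sub_distrib]
    rw [c1, c2, c3, c4, c5]
  -- total 𝔥 sum
  have E1 : (∑ i, ∑ j, (𝔥 i j)^2) =
      (∑ i, ∑ j, (H i j)^2) - (∑ i, ∑ j, H i j * (g i * v j))
      + Matrix.trace H * (∑ k, g k * v k)
      + (∑ k, (g k)^2) * (∑ k, (v k)^2) / 8
      + (∑ k, g k * v k)^2 * (2*(d:ℝ) - 3) / 8 := by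
    rw [Finset.sum_congr rfl fun i _ => inner𝔥 i]
    simp only [Finset.sum_add_distrib, Finset.sum_sub_distrib]
    have t2 : (∑ i, (1/2:ℝ) * ∑ j, H i j * (g i * v j))
        = (1/2) * ∑ i, ∑ j, H i j * (g i * v j) := sum_pull _ fun i => rfl
    have t3 : (∑ i, (1/2:ℝ) * ∑ j, H i j * (g j * v i))
        = (1/2) * ∑ i, ∑ j, H i j * (g j * v i) := sum_pull _ fun i => rfl
    have t4 : (∑ i, ((1:ℝ)/16 * (g i)^2) * (∑ k, (v k)^2))
        = (∑ i, (g i)^2) * (1/16 * ∑ k, (v k)^2) := sum_pull' _ fun i => by ring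
    have t5 : (∑ i, ((1:ℝ)/8 * (g i * v i)) * (∑ k, g k * v k))
        = (∑ i, g i * v i) * (1/8 * ∑ k, g k * v k) := sum_pull' _ fun i => by ring
    have t6 : (∑ i, ((1:ℝ)/16 * (v i)^2) * (∑ k, (g k)^2))
        = (∑ i, (v i)^2) * (1/16 * ∑ k, (g k)^2) := sum_pull' _ fun i => by ring
    have t7 : (∑ _i : Fin d, (∑ k, g k * v k)^2/4) = (d:ℝ) * ((∑ k, g k * v k)^2/4) := by
      rw [Finset.sum_const, Finset.card_univ, Fintype.card_fin, nsmul_eq_mul]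
    have t8 : (∑ i, (∑ k, g k * v k) * H i i) = (∑ k, g k * v k) * ∑ i, H i i :=
      sum_pull _ fun i => rfl
    have t9 : (∑ i, ((∑ k, g k * v k)/2) * (g i * v i))
        = ((∑ k, g k * v k)/2) * ∑ i, g i * v i := sum_pull _ fun i => rfl
    rw [t2, t3, t4, t5, t6, t7, t8, t9, swap, hT]
    ring
  -- inner sums for R
  have innerR : ∀ i, (∑ j, R i j * v i * v j) =
      -(∑ j, M i j * v i * v j)
      + ((3 - 2*(d:ℝ))/8 * (g i * v i)) * (∑ k, g k * v k)
      + ((1/2) * (g i * v i)) * (∑ k, u k * v k)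
      + ((1/2) * (u i * v i)) * (∑ k, g k * v k)
      + (-(1/8) * ((∑ k, (g k)^2) * ((v i)^2))) := by
    intro i
    have key : ∀ j, R i j * v i * v j =
        (-(M i j * v i * v j)
         + ((3 - 2*(d:ℝ))/8 * (g i * v i)) * (g j * v j)
         + ((1/2) * (g i * v i)) * (u j * v j)
         + ((1/2) * (u i * v i)) * (g j * v j))
        + (if i = j then -(1/8) * ((∑ k, (g k)^2) * ((v i)^2)) else 0) := by
      intro j
      rw [hR]
      by_cases h : i = j
      · subst h; rw [if_pos rfl, if_pos rfl]; ring
      · rw [if_neg h, if_neg h]; ring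
    rw [Finset.sum_congr rfl fun j _ => key j, Finset.sum_add_distrib, sum_diag]
    have n1 : (∑ j, -(M i j * v i * v j)) = -(∑ j, M i j * v i * v j) := by
      simp
    have n2 : (∑ j, ((3 - 2*(d:ℝ))/8 * (g i * v i)) * (g j * v j))
        = ((3 - 2*(d:ℝ))/8 * (g i * v i)) * ∑ k, g k * v k := sum_pull _ fun j => rfl
    have n3 : (∑ j, ((1:ℝ)/2 * (g i * v i)) * (u j * v j))
        = ((1/2) * (g i * v i)) * ∑ k, u k * v k := sum_pull _ fun j => rfl
    have n4 : (∑ j, ((1:ℝ)/2 * (u i * v i)) * (g j * v j))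
        = ((1/2) * (u i * v i)) * ∑ k, g k * v k := sum_pull _ fun j => rfl
    simp only [Finset.sum_add_distrib]
    rw [n1, n2, n3, n4]
  -- total R sum
  have E2 : (∑ i, ∑ j, R i j * v i * v j) =
      -(∑ i, ∑ j, M i j * v i * v j)
      + ((3 - 2*(d:ℝ))/8) * (∑ k, g k * v k)^2
      + (∑ k, u k * v k) * (∑ k, g k * v k)
      - (1/8) * ((∑ k, (g k)^2) * (∑ k, (v k)^2)) := by
    rw [Finset.sum_congr rfl fun i _ => innerR i]
    simp only [Finset.sum_add_distrib]
    have m1 : (∑ i, -(∑ j, M i j * v i * v j)) = -(∑ i, ∑ j, M i j * v i * v j) := by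
      simp
    have m2 : (∑ i, ((3 - 2*(d:ℝ))/8 * (g i * v i)) * (∑ k, g k * v k))
        = (∑ i, g i * v i) * ((3 - 2*(d:ℝ))/8 * ∑ k, g k * v k) :=
      sum_pull' _ fun i => by ring
    have m3 : (∑ i, ((1:ℝ)/2 * (g i * v i)) * (∑ k, u k * v k))
        = (∑ i, g i * v i) * (1/2 * ∑ k, u k * v k) := sum_pull' _ fun i => by ring
    have m4 : (∑ i, ((1:ℝ)/2 * (u i * v i)) * (∑ k, g k * v k))
        = (∑ i, u i * v i) * (1/2 * ∑ k, g k * v k) := sum_pull' _ fun i => by ring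
    have m5 : (∑ i, -((1:ℝ)/8) * ((∑ k, (g k)^2) * ((v i)^2)))
        = (∑ i, (v i)^2) * (-(1/8) * ∑ k, (g k)^2) := sum_pull' _ fun i => by ring
    rw [m1, m2, m3, m4, m5]
    ring
  -- remaining LHS pieces
  have E3 : (∑ i, g i * ∑ j, H i j * v j) = ∑ i, ∑ j, H i j * (g i * v j) := by
    refine Finset.sum_congr rfl fun i _ => ?_
    rw [Finset.mul_sum]
    exact Finset.sum_congr rfl fun j _ => by ring
  have E4 : (∑ i, v i * g i) = ∑ k, g k * v k :=
    Finset.sum_congr rfl fun i _ => mul_comm _ _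
  have E5 : (∑ i, v i * u i) = ∑ k, u k * v k :=
    Finset.sum_congr rfl fun i _ => mul_comm _ _
  rw [E1, E2, E3, E4, E5]
  ring
end

section
/- Claim (ii) in the proof of Lemma 3.1: let f : ℝ^d → ℝ be smooth with compact support and set p := π·e^f. Then ∫_{ℝ^d} Γ_I(f,f)(x) p(x) dx = ∫_{ℝ^d} L̃f(x)·∇·(p γ)(x) dx + ½ ∫_{ℝ^d} Γ₁(f,f)(x)·∇·(p γ)(x) dx. -/
open MeasureTheory
open scoped BigOperators

noncomputable section

namespace ClaimIIAux

variable {d : ℕ}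

lemma contDiff_pderiv' {f : EuclideanSpace ℝ (Fin d) → ℝ} (hf : ContDiff ℝ (⊤ : ℕ∞) f)
    (i : Fin d) : ContDiff ℝ (⊤ : ℕ∞) (pderiv' f i) :=
  (hf.fderiv_right (by simp)).clm_apply contDiff_const

lemma hcs_pderiv' {f : EuclideanSpace ℝ (Fin d) → ℝ} (hf : HasCompactSupport f)
    (i : Fin d) : HasCompactSupport (pderiv' f i) :=
  hf.fderiv_apply ℝ (EuclideanSpace.single i 1)

lemma hcs_sum {ι : Type*} (s : Finset ι) (F : ι → EuclideanSpace ℝ (Fin d) → ℝ)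
    (h : ∀ i ∈ s, HasCompactSupport (F i)) :
    HasCompactSupport (fun x => ∑ i ∈ s, F i x) := by
  classical
  induction s using Finset.induction with
  | empty =>
    have : (fun _ : EuclideanSpace ℝ (Fin d) => (0:ℝ)) = 0 := rfl
    simp only [Finset.sum_empty, this]
    rw [HasCompactSupport, tsupport]
    simp
  | @insert a s hnot ih =>
    simp only [Finset.sum_insert hnot]
    exact (h a (Finset.mem_insert_self a s)).add
      (ih fun i hi => h i (Finset.mem_insert_of_mem hi))

lemma pderiv'_mul {a b : EuclideanSpace ℝ (Fin d) → ℝ}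
    (ha : Differentiable ℝ a) (hb : Differentiable ℝ b) (i : Fin d)
    (x : EuclideanSpace ℝ (Fin d)) :
    pderiv' (fun y => a y * b y) i x = a x * pderiv' b i x + b x * pderiv' a i x := by
  unfold pderiv'
  rw [fderiv_fun_mul (ha x) (hb x)]
  simp [smul_eq_mul]

lemma pderiv'_exp {f : EuclideanSpace ℝ (Fin d) → ℝ} (hf : Differentiable ℝ f)
    (i : Fin d) (x : EuclideanSpace ℝ (Fin d)) :
    pderiv' (fun y => Real.exp (f y)) i x = Real.exp (f x) * pderiv' f i x := by
  unfold pderiv'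
  rw [fderiv_exp (hf x)]
  simp [smul_eq_mul]

end ClaimIIAux


/-- Claim (ii) in the proof of Lemma 3.1:
`∫ Γ_I(f,f) p = ∫ L̃f · ∇·(pγ) + ½ ∫ Γ₁(f,f) · ∇·(pγ)` where `p = π e^f`. -/
theorem claim_ii_gamma_I_weak
    (d : ℕ) (hd : 1 ≤ d)
    (π : EuclideanSpace ℝ (Fin d) → ℝ) (hπ : ContDiff ℝ (⊤ : ℕ∞) π)
    (hπpos : ∀ x, 0 < π x)
    (γ : EuclideanSpace ℝ (Fin d) → EuclideanSpace ℝ (Fin d))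
    (hγ : ContDiff ℝ (⊤ : ℕ∞) γ)
    (hstat : ∀ x, ∑ i, pderiv' (fun y => π y * γ y i) i x = 0)
    (f : EuclideanSpace ℝ (Fin d) → ℝ) (hf : ContDiff ℝ (⊤ : ℕ∞) f)
    (hfc : HasCompactSupport f) :
    ∫ x, GammaI π γ f x * (π x * Real.exp (f x)) =
      (∫ x, genL π f x *
          (∑ i, pderiv' (fun y => (π y * Real.exp (f y)) * γ y i) i x))
        + (1/2 : ℝ) * ∫ x, Gamma1 f f x *
            (∑ i, pderiv' (fun y => (π y * Real.exp (f y)) * γ y i) i x) := by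
  classical
  have hfd : Differentiable ℝ f := hf.differentiable (by simp)
  have hπd : Differentiable ℝ π := hπ.differentiable (by simp)
  have hγc : ∀ i : Fin d, ContDiff ℝ (⊤ : ℕ∞) (fun y => γ y i) := fun i =>
    (EuclideanSpace.proj (𝕜 := ℝ) i).contDiff.comp hγ
  have hpc : ContDiff ℝ (⊤ : ℕ∞) (fun y => π y * Real.exp (f y)) := hπ.mul hf.exp
  have hpγc : ∀ i : Fin d, ContDiff ℝ (⊤ : ℕ∞) (fun y => (π y * Real.exp (f y)) * γ y i) :=
    fun i => hpc.mul (hγc i)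
  have huc : ContDiff ℝ (⊤ : ℕ∞) (Gamma1 f f) := by
    unfold Gamma1
    exact ContDiff.sum fun i _ =>
      (ClaimIIAux.contDiff_pderiv' hf i).mul (ClaimIIAux.contDiff_pderiv' hf i)
  have hucs : HasCompactSupport (Gamma1 f f) := by
    unfold Gamma1
    exact ClaimIIAux.hcs_sum _ _ fun i _ => (ClaimIIAux.hcs_pderiv' hfc i).mul_right
  have hScont : Continuous (fun x => ∑ i, pderiv' f i x * γ x i) :=
    (ContDiff.sum fun (i : Fin d) _ =>
      (ClaimIIAux.contDiff_pderiv' hf i).mul (hγc i)).continuous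
  have hScs : HasCompactSupport (fun x => ∑ i, pderiv' f i x * γ x i) :=
    ClaimIIAux.hcs_sum _ _ fun i _ => (ClaimIIAux.hcs_pderiv' hfc i).mul_right
  have hTcont : Continuous
      (fun x => ∑ i, γ x i * pderiv' (fun y => Gamma1 f f y) i x) :=
    (ContDiff.sum fun (i : Fin d) _ =>
      (hγc i).mul (ClaimIIAux.contDiff_pderiv' huc i)).continuous
  have hTcs : HasCompactSupport
      (fun x => ∑ i, γ x i * pderiv' (fun y => Gamma1 f f y) i x) :=
    ClaimIIAux.hcs_sum _ _ fun i _ => (ClaimIIAux.hcs_pderiv' hucs i).mul_left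
  have hlogc : ContDiff ℝ (⊤ : ℕ∞) (fun y => Real.log (π y)) :=
    hπ.log fun x => (hπpos x).ne'
  have hgenc : Continuous (genL π f) := by
    unfold genL Gamma1 lap pderiv2
    exact ((ContDiff.sum fun (i : Fin d) _ =>
        (ClaimIIAux.contDiff_pderiv' hlogc i).mul (ClaimIIAux.contDiff_pderiv' hf i)).continuous).add
      ((ContDiff.sum fun (i : Fin d) _ =>
        ClaimIIAux.contDiff_pderiv' (ClaimIIAux.contDiff_pderiv' hf i) i).continuous)
  -- pointwise stationarity identity for p = π e^f
  have hdiv : ∀ x, (∑ i, pderiv' (fun y => (π y * Real.exp (f y)) * γ y i) i x)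
      = (π x * Real.exp (f x)) * ∑ i, pderiv' f i x * γ x i := by
    intro x
    have h1 : ∀ i : Fin d, pderiv' (fun y => (π y * Real.exp (f y)) * γ y i) i x
        = Real.exp (f x) * pderiv' (fun y => π y * γ y i) i x
          + (π x * γ x i * Real.exp (f x)) * pderiv' f i x := by
      intro i
      have e1 : (fun y => (π y * Real.exp (f y)) * γ y i)
          = fun y => (π y * γ y i) * Real.exp (f y) := by funext y; ring
      rw [e1, ClaimIIAux.pderiv'_mul (a := fun y => π y * γ y i) (hπd.mul ((hγc i).differentiable (by simp)))
        hfd.exp i x, ClaimIIAux.pderiv'_exp hfd i x]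
      ring
    rw [Finset.sum_congr rfl fun i _ => h1 i, Finset.sum_add_distrib, ← Finset.mul_sum,
      hstat x, mul_zero, zero_add, Finset.mul_sum]
    exact Finset.sum_congr rfl fun i _ => by ring
  -- integration by parts in direction i
  have hibp : ∀ i : Fin d,
      (∫ x, Gamma1 f f x * pderiv' (fun y => (π y * Real.exp (f y)) * γ y i) i x)
      = - ∫ x, pderiv' (fun y => Gamma1 f f y) i x * ((π x * Real.exp (f x)) * γ x i) := by
    intro i
    have h := integral_mul_fderiv_eq_neg_fderiv_mul_of_integrable
      (μ := (volume : Measure (EuclideanSpace ℝ (Fin d))))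
      (f := Gamma1 f f) (g := fun y => (π y * Real.exp (f y)) * γ y i)
      (v := EuclideanSpace.single i 1)
      (((ClaimIIAux.contDiff_pderiv' huc i).continuous.mul
          (hpγc i).continuous).integrable_of_hasCompactSupport
        ((ClaimIIAux.hcs_pderiv' hucs i).mul_right))
      ((huc.continuous.mul
          (ClaimIIAux.contDiff_pderiv' (hpγc i) i).continuous).integrable_of_hasCompactSupport
        (hucs.mul_right))
      ((huc.continuous.mul (hpγc i).continuous).integrable_of_hasCompactSupport
        (hucs.mul_right))
      (fun x _ => huc.differentiable (by simp) x) (fun x _ => (hpγc i).differentiable (by simp) x)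
    exact h
  -- ∫ u · div(pγ) = - ∫ ⟨∇u, γ⟩ p
  have hintD : (∫ x, Gamma1 f f x *
        (∑ i, pderiv' (fun y => (π y * Real.exp (f y)) * γ y i) i x))
      = - ∫ x, (∑ i, γ x i * pderiv' (fun y => Gamma1 f f y) i x)
          * (π x * Real.exp (f x)) := by
    have e1 : (fun x => Gamma1 f f x *
          (∑ i, pderiv' (fun y => (π y * Real.exp (f y)) * γ y i) i x))
        = fun x => ∑ i, Gamma1 f f x *
            pderiv' (fun y => (π y * Real.exp (f y)) * γ y i) i x := by
      funext x; rw [Finset.mul_sum]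
    rw [e1, integral_finset_sum (f := fun i x => Gamma1 f f x *
        pderiv' (fun y => (π y * Real.exp (f y)) * γ y i) i x) _ (fun i _ =>
      (huc.continuous.mul
          (ClaimIIAux.contDiff_pderiv' (hpγc i) i).continuous).integrable_of_hasCompactSupport
        (hucs.mul_right))]
    rw [Finset.sum_congr rfl fun i (_ : i ∈ Finset.univ) => hibp i, Finset.sum_neg_distrib,
      ← integral_finset_sum (f := fun i x => pderiv' (fun y => Gamma1 f f y) i x *
          ((π x * Real.exp (f x)) * γ x i)) _ (fun i _ =>
        (((ClaimIIAux.contDiff_pderiv' huc i).continuous.mul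
            (hpγc i).continuous).integrable_of_hasCompactSupport
          ((ClaimIIAux.hcs_pderiv' hucs i).mul_right)))]
    congr 1
    apply integral_congr_ae
    filter_upwards with x
    rw [Finset.sum_mul]
    exact Finset.sum_congr rfl fun i _ => by ring
  -- rewrite first RHS term using hdiv
  have hR1 : (∫ x, genL π f x *
        (∑ i, pderiv' (fun y => (π y * Real.exp (f y)) * γ y i) i x))
      = ∫ x, genL π f x *
          ((π x * Real.exp (f x)) * (∑ i, pderiv' f i x * γ x i)) :=
    integral_congr_ae (Filter.Eventually.of_forall fun x => by simp only [hdiv x])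
  -- split the LHS
  have hA : Integrable (fun x => genL π f x *
      ((π x * Real.exp (f x)) * (∑ i, pderiv' f i x * γ x i))) :=
    (hgenc.mul (hpc.continuous.mul hScont)).integrable_of_hasCompactSupport
      (hScs.mul_left.mul_left)
  have hB : Integrable (fun x => (∑ i, γ x i * pderiv' (fun y => Gamma1 f f y) i x)
      * (π x * Real.exp (f x))) :=
    (hTcont.mul hpc.continuous).integrable_of_hasCompactSupport hTcs.mul_right
  have hLHS : (∫ x, GammaI π γ f x * (π x * Real.exp (f x)))
      = (∫ x, genL π f x *
            ((π x * Real.exp (f x)) * (∑ i, pderiv' f i x * γ x i)))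
        + (1/2 : ℝ) * (- ∫ x, (∑ i, γ x i * pderiv' (fun y => Gamma1 f f y) i x)
            * (π x * Real.exp (f x))) := by
    have e : (fun x => GammaI π γ f x * (π x * Real.exp (f x)))
        = fun x => genL π f x *
              ((π x * Real.exp (f x)) * (∑ i, pderiv' f i x * γ x i))
            + (-(1/2 : ℝ)) * ((∑ i, γ x i * pderiv' (fun y => Gamma1 f f y) i x)
              * (π x * Real.exp (f x))) := by
      funext x; unfold GammaI; ring
    rw [e, integral_add hA (hB.const_mul _), integral_const_mul]
    ring
  rw [hLHS, hR1, hintD]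

end
end

section
/- Orthogonality claim in the proof of Corollary 2.3: let f : ℝ^d → ℝ be smooth with compact support and set p := π·e^f (so f = log(p/π)). Then ∫_{ℝ^d} ⟨∇f(x), γ(x)⟩ p(x) dx = 0. -/
open MeasureTheory
open scoped BigOperators

noncomputable section

/-- The integral of a partial derivative of a compactly supported smooth function vanishes. -/
lemma integral_fderiv_apply_eq_zero {d : ℕ} (h : EuclideanSpace ℝ (Fin d) → ℝ)
    (hh : ContDiff ℝ (⊤ : ℕ∞) h) (hc : HasCompactSupport h) (v : EuclideanSpace ℝ (Fin d)) :
    ∫ x, fderiv ℝ h x v = 0 := by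
  have hcont : Continuous fun x => fderiv ℝ h x v :=
    (hh.continuous_fderiv (by simp)).clm_apply continuous_const
  have key := integral_mul_fderiv_eq_neg_fderiv_mul_of_integrable
    (μ := (volume : Measure (EuclideanSpace ℝ (Fin d))))
    (f := fun _ : EuclideanSpace ℝ (Fin d) => (1 : ℝ)) (g := h) (v := v)
    (by simp [fderiv_fun_const])
    (by simpa using (hcont.integrable_of_hasCompactSupport (hc.fderiv_apply ℝ v)))
    (by simpa using hh.continuous.integrable_of_hasCompactSupport hc)
    (fun x _ => differentiableAt_const _) (fun x _ => hh.differentiable (by simp) x)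
  simpa [fderiv_fun_const] using key

/-- Orthogonality claim in the proof of Corollary 2.3:
`∫ ⟨∇f, γ⟩ p dx = 0` where `p = π e^f`. -/
theorem orthogonality_claim
    (d : ℕ) (hd : 1 ≤ d)
    (π : EuclideanSpace ℝ (Fin d) → ℝ) (hπ : ContDiff ℝ (⊤ : ℕ∞) π)
    (hπpos : ∀ x, 0 < π x)
    (γ : EuclideanSpace ℝ (Fin d) → EuclideanSpace ℝ (Fin d))
    (hγ : ContDiff ℝ (⊤ : ℕ∞) γ)
    (hstat : ∀ x, ∑ i, pderiv' (fun y => π y * γ y i) i x = 0)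
    (f : EuclideanSpace ℝ (Fin d) → ℝ) (hf : ContDiff ℝ (⊤ : ℕ∞) f)
    (hfc : HasCompactSupport f) :
    ∫ x, (∑ i, pderiv' f i x * γ x i) * (π x * Real.exp (f x)) = 0 := by
  classical
  set g : EuclideanSpace ℝ (Fin d) → ℝ := fun y => Real.exp (f y) - 1 with hg_def
  have hgsmooth : ContDiff ℝ (⊤ : ℕ∞) g := (Real.contDiff_exp.comp hf).sub contDiff_const
  have hgsupp : HasCompactSupport g :=
    hfc.comp_left (g := fun t : ℝ => Real.exp t - 1) (by simp)
  have hγi : ∀ i, ContDiff ℝ (⊤ : ℕ∞) (fun y => γ y i) := fun i =>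
    (EuclideanSpace.proj i : EuclideanSpace ℝ (Fin d) →L[ℝ] ℝ).contDiff.comp hγ
  set q : Fin d → EuclideanSpace ℝ (Fin d) → ℝ := fun i y => π y * γ y i with hq_def
  have hqsmooth : ∀ i, ContDiff ℝ (⊤ : ℕ∞) (q i) := fun i => hπ.mul (hγi i)
  set h : Fin d → EuclideanSpace ℝ (Fin d) → ℝ := fun i y => g y * q i y with hh_def
  have hhsmooth : ∀ i, ContDiff ℝ (⊤ : ℕ∞) (h i) := fun i => hgsmooth.mul (hqsmooth i)
  have hhsupp : ∀ i, HasCompactSupport (h i) := fun i => hgsupp.mul_right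
  have hfd : Differentiable ℝ f := hf.differentiable (by simp)
  -- derivative of g
  have hgderiv : ∀ x, fderiv ℝ g x = Real.exp (f x) • fderiv ℝ f x := by
    intro x
    have h1 : HasFDerivAt (fun y => Real.exp (f y)) (Real.exp (f x) • fderiv ℝ f x) x :=
      (Real.hasDerivAt_exp (f x)).comp_hasFDerivAt x (hfd x).hasFDerivAt
    exact (h1.sub_const 1).fderiv
  -- pointwise identity
  have hpt : ∀ x, (∑ i, pderiv' f i x * γ x i) * (π x * Real.exp (f x))
      = ∑ i, pderiv' (h i) i x := by
    intro x
    have hterm : ∀ i, pderiv' (h i) i x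
        = Real.exp (f x) * pderiv' f i x * q i x + g x * pderiv' (q i) i x := by
      intro i
      have hgx : DifferentiableAt ℝ g x := hgsmooth.differentiable (by simp) x
      have hqx : DifferentiableAt ℝ (q i) x :=
        (hqsmooth i).differentiable (by simp) x
      have := fderiv_fun_mul hgx hqx
      simp only [pderiv', hh_def]
      rw [this]
      simp only [ContinuousLinearMap.add_apply, ContinuousLinearMap.smul_apply,
        hgderiv x, smul_eq_mul]
      ring
    rw [Finset.sum_congr rfl (fun i _ => hterm i), Finset.sum_add_distrib,
      ← Finset.mul_sum]
    have : ∑ i, pderiv' (q i) i x = 0 := hstat x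
    rw [this, mul_zero, add_zero, Finset.sum_mul]
    exact Finset.sum_congr rfl fun i _ => by simp only [hq_def]; ring
  calc ∫ x, (∑ i, pderiv' f i x * γ x i) * (π x * Real.exp (f x))
      = ∫ x, ∑ i, pderiv' (h i) i x := by simp_rw [hpt]
    _ = ∑ i, ∫ x, pderiv' (h i) i x := by
        refine integral_finset_sum _ (fun i _ => ?_)
        have hcont : Continuous fun x => pderiv' (h i) i x :=
          ((hhsmooth i).continuous_fderiv (by simp)).clm_apply continuous_const
        exact hcont.integrable_of_hasCompactSupport
          ((hhsupp i).fderiv_apply ℝ (EuclideanSpace.single i 1))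
    _ = 0 := by
        refine Finset.sum_eq_zero (fun i _ => ?_)
        exact integral_fderiv_apply_eq_zero (h i) (hhsmooth i) (hhsupp i) _


end
end

section
/- Pointwise lower bound on the information Gamma operators under the tensor condition (step in the proof of Theorem 2.2): assume there exists λ > 0 such that ⟨ℜ(x) v, v⟩ ≥ λ ‖v‖² for every x ∈ ℝ^d and every v ∈ ℝ^d. Then for every smooth f : ℝ^d → ℝ and every x ∈ ℝ^d, Γ₂(f,f)(x) + Γ_I(f,f)(x) ≥ ‖𝔥ess f(x)‖_F² + λ ‖∇f(x)‖²; in particular Γ₂(f,f) + Γ_I(f,f) ≥ λ Γ₁(f,f) pointwise. -/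
open MeasureTheory
open scoped BigOperators

noncomputable section

namespace GammaAux

variable {d : ℕ}

theorem le1 : (1 : WithTop ℕ∞) ≤ ((⊤:ℕ∞) : WithTop ℕ∞) := by norm_cast
theorem le2 : (2 : WithTop ℕ∞) ≤ ((⊤:ℕ∞) : WithTop ℕ∞) := by norm_cast
theorem leS : ((⊤:ℕ∞) : WithTop ℕ∞) + 1 ≤ ((⊤:ℕ∞) : WithTop ℕ∞) := by norm_cast

theorem smooth_pderiv' {f : EuclideanSpace ℝ (Fin d) → ℝ} (hf : ContDiff ℝ (⊤:ℕ∞) f) (i : Fin d) :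
    ContDiff ℝ (⊤:ℕ∞) (fun y => pderiv' f i y) := by
  unfold pderiv'
  exact (hf.fderiv_right leS).clm_apply contDiff_const

theorem smooth_pderiv2 {f : EuclideanSpace ℝ (Fin d) → ℝ} (hf : ContDiff ℝ (⊤:ℕ∞) f) (i j : Fin d) :
    ContDiff ℝ (⊤:ℕ∞) (fun y => pderiv2 f i j y) :=
  smooth_pderiv' (smooth_pderiv' hf j) i

theorem pderiv'_mul {f g : EuclideanSpace ℝ (Fin d) → ℝ} (hf : ContDiff ℝ (⊤:ℕ∞) f)
    (hg : ContDiff ℝ (⊤:ℕ∞) g) (i : Fin d) (x : EuclideanSpace ℝ (Fin d)) :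
    pderiv' (fun y => f y * g y) i x = pderiv' f i x * g x + f x * pderiv' g i x := by
  unfold pderiv'
  rw [fderiv_fun_mul (hf.differentiable (by simp) x) (hg.differentiable (by simp) x)]
  simp; ring

theorem pderiv'_add {f g : EuclideanSpace ℝ (Fin d) → ℝ} (hf : ContDiff ℝ (⊤:ℕ∞) f)
    (hg : ContDiff ℝ (⊤:ℕ∞) g) (i : Fin d) (x : EuclideanSpace ℝ (Fin d)) :
    pderiv' (fun y => f y + g y) i x = pderiv' f i x + pderiv' g i x := by
  unfold pderiv'
  rw [fderiv_fun_add (hf.differentiable (by simp) x) (hg.differentiable (by simp) x)]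
  simp

theorem pderiv'_sum {ι : Type*} (s : Finset ι) {F : ι → EuclideanSpace ℝ (Fin d) → ℝ}
    (hF : ∀ i ∈ s, ContDiff ℝ (⊤:ℕ∞) (F i)) (k : Fin d) (x : EuclideanSpace ℝ (Fin d)) :
    pderiv' (fun y => ∑ i ∈ s, F i y) k x = ∑ i ∈ s, pderiv' (F i) k x := by
  unfold pderiv'
  rw [fderiv_fun_sum (fun i hi => (hF i hi).differentiable (by simp) x)]
  simp

theorem pderiv2_eq {f : EuclideanSpace ℝ (Fin d) → ℝ} (hf : ContDiff ℝ (⊤:ℕ∞) f) (i j : Fin d)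
    (x : EuclideanSpace ℝ (Fin d)) :
    pderiv2 f i j x
      = fderiv ℝ (fderiv ℝ f) x (EuclideanSpace.single i 1) (EuclideanSpace.single j 1) := by
  unfold pderiv2 pderiv'
  rw [fderiv_clm_apply ((hf.fderiv_right leS).differentiable (by simp) x) (differentiableAt_const _)]
  simp

theorem pderiv2_symm {f : EuclideanSpace ℝ (Fin d) → ℝ} (hf : ContDiff ℝ (⊤:ℕ∞) f) (i j : Fin d)
    (x : EuclideanSpace ℝ (Fin d)) : pderiv2 f i j x = pderiv2 f j i x := by
  rw [pderiv2_eq hf, pderiv2_eq hf]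
  exact (hf.contDiffAt.isSymmSndFDerivAt (by rw [minSmoothness_of_isRCLikeNormedField]; exact le2)) _ _

/-- third-order commutation: `∂_i ∂_j ∂_j f = ∂_j ∂_j ∂_i f`. -/
theorem pderiv'_pderiv2_comm {f : EuclideanSpace ℝ (Fin d) → ℝ} (hf : ContDiff ℝ (⊤:ℕ∞) f)
    (i j : Fin d) (x : EuclideanSpace ℝ (Fin d)) :
    pderiv' (fun y => pderiv2 f j j y) i x = pderiv2 (fun y => pderiv' f i y) j j x := by
  have hDj : ContDiff ℝ (⊤:ℕ∞) (fun y => pderiv' f j y) := smooth_pderiv' hf j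
  have h1 : pderiv' (fun y => pderiv2 f j j y) i x
      = pderiv2 (fun y => pderiv' f j y) i j x := rfl
  rw [h1, pderiv2_symm hDj]
  show pderiv' (fun y => pderiv2 f i j y) j x = _
  have h2 : (fun y => pderiv2 f i j y) = fun y => pderiv2 f j i y := by
    funext y; exact pderiv2_symm hf i j y
  rw [h2]
  rfl

end GammaAux

namespace GammaAux
variable {d : ℕ}

theorem pderiv'_gamma1 {f : EuclideanSpace ℝ (Fin d) → ℝ} (hf : ContDiff ℝ (⊤:ℕ∞) f)
    (k : Fin d) (x : EuclideanSpace ℝ (Fin d)) :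
    pderiv' (fun y => Gamma1 f f y) k x
      = ∑ i, 2 * (pderiv' f i x * pderiv2 f k i x) := by
  unfold Gamma1
  rw [pderiv'_sum Finset.univ
    (fun i _ => (smooth_pderiv' hf i).mul (smooth_pderiv' hf i)) k x]
  refine Finset.sum_congr rfl fun i _ => ?_
  rw [pderiv'_mul (smooth_pderiv' hf i) (smooth_pderiv' hf i)]
  show pderiv2 f k i x * pderiv' f i x + pderiv' f i x * pderiv2 f k i x = _
  ring

theorem lap_gamma1 {f : EuclideanSpace ℝ (Fin d) → ℝ} (hf : ContDiff ℝ (⊤:ℕ∞) f)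
    (x : EuclideanSpace ℝ (Fin d)) :
    lap (fun y => Gamma1 f f y) x
      = ∑ j, ∑ i, (2 * (pderiv2 f j i x)^2
          + 2 * (pderiv' f i x * pderiv2 (fun y => pderiv' f i y) j j x)) := by
  unfold lap
  refine Finset.sum_congr rfl fun j _ => ?_
  show pderiv' (fun y => pderiv' (fun z => Gamma1 f f z) j y) j x = _
  have h1 : (fun y => pderiv' (fun z => Gamma1 f f z) j y)
      = fun y => ∑ i, 2 * (pderiv' f i y * pderiv2 f j i y) := by
    funext y; exact pderiv'_gamma1 hf j y
  rw [h1, pderiv'_sum Finset.univ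
    (fun i _ => contDiff_const.mul ((smooth_pderiv' hf i).mul (smooth_pderiv2 hf j i))) j x]
  refine Finset.sum_congr rfl fun i _ => ?_
  have h2 : pderiv' (fun y => 2 * (pderiv' f i y * pderiv2 f j i y)) j x
      = 2 * pderiv' (fun y => pderiv' f i y * pderiv2 f j i y) j x := by
    have := pderiv'_mul (f := fun _ => (2:ℝ))
      (g := fun y => pderiv' f i y * pderiv2 f j i y) contDiff_const
      ((smooth_pderiv' hf i).mul (smooth_pderiv2 hf j i)) j x
    simpa [pderiv', fderiv_const] using this
  rw [h2, pderiv'_mul (smooth_pderiv' hf i) (smooth_pderiv2 hf j i)]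
  show 2 * (pderiv2 f j i x * pderiv2 f j i x
      + pderiv' f i x * pderiv2 (fun y => pderiv' f i y) j j x) = _
  ring

theorem pderiv'_lap {f : EuclideanSpace ℝ (Fin d) → ℝ} (hf : ContDiff ℝ (⊤:ℕ∞) f)
    (i : Fin d) (x : EuclideanSpace ℝ (Fin d)) :
    pderiv' (fun y => lap f y) i x
      = ∑ j, pderiv2 (fun y => pderiv' f i y) j j x := by
  unfold lap
  rw [pderiv'_sum Finset.univ (fun j _ => smooth_pderiv2 hf j j) i x]
  exact Finset.sum_congr rfl fun j _ => pderiv'_pderiv2_comm hf i j x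

theorem pderiv'_genL {π f : EuclideanSpace ℝ (Fin d) → ℝ}
    (hπ : ContDiff ℝ (⊤:ℕ∞) fun y => Real.log (π y)) (hf : ContDiff ℝ (⊤:ℕ∞) f)
    (i : Fin d) (x : EuclideanSpace ℝ (Fin d)) :
    pderiv' (fun y => genL π f y) i x
      = (∑ j, (pderiv2 (fun y => Real.log (π y)) i j x * pderiv' f j x
            + pderiv' (fun y => Real.log (π y)) j x * pderiv2 f i j x))
        + ∑ j, pderiv2 (fun y => pderiv' f i y) j j x := by
  unfold genL
  rw [pderiv'_add (by
      unfold Gamma1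
      exact ContDiff.sum fun j _ => (smooth_pderiv' hπ j).mul (smooth_pderiv' hf j))
    (by unfold lap; exact ContDiff.sum fun j _ => smooth_pderiv2 hf j j) i x]
  rw [pderiv'_lap hf i x]
  congr 1
  unfold Gamma1
  rw [pderiv'_sum Finset.univ
    (fun j _ => (smooth_pderiv' hπ j).mul (smooth_pderiv' hf j)) i x]
  exact Finset.sum_congr rfl fun j _ =>
    pderiv'_mul (smooth_pderiv' hπ j) (smooth_pderiv' hf j) i x

end GammaAux

namespace GammaAux
variable {d : ℕ}

theorem Gamma2_eq {π f : EuclideanSpace ℝ (Fin d) → ℝ}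
    (hπ : ContDiff ℝ (⊤:ℕ∞) fun y => Real.log (π y)) (hf : ContDiff ℝ (⊤:ℕ∞) f)
    (x : EuclideanSpace ℝ (Fin d)) :
    Gamma2 π f x = (∑ i, ∑ j, (pderiv2 f i j x)^2)
      - ∑ i, ∑ j, pderiv2 (fun y => Real.log (π y)) i j x * pderiv' f i x * pderiv' f j x := by
  unfold Gamma2
  have h1 : genL π (fun y => Gamma1 f f y) x
      = (∑ j, ∑ i, 2 * (pderiv' (fun y => Real.log (π y)) j x
            * (pderiv' f i x * pderiv2 f j i x)))
        + ∑ j, ∑ i, (2 * (pderiv2 f j i x)^2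
            + 2 * (pderiv' f i x * pderiv2 (fun y => pderiv' f i y) j j x)) := by
    unfold genL
    rw [lap_gamma1 hf x]
    congr 1
    have e1 : Gamma1 (fun y => Real.log (π y)) (fun y => Gamma1 f f y) x
        = ∑ j, pderiv' (fun y => Real.log (π y)) j x
            * pderiv' (fun y => Gamma1 f f y) j x := rfl
    rw [e1]
    refine Finset.sum_congr rfl fun j _ => ?_
    rw [pderiv'_gamma1 hf j x, Finset.mul_sum]
    refine Finset.sum_congr rfl fun i _ => ?_
    ring
  have h2 : Gamma1 (fun y => genL π f y) f x
      = ∑ i, ∑ j, ((pderiv2 (fun y => Real.log (π y)) i j x * pderiv' f j x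
            + pderiv' (fun y => Real.log (π y)) j x * pderiv2 f i j x) * pderiv' f i x
          + pderiv2 (fun y => pderiv' f i y) j j x * pderiv' f i x) := by
    have e2 : Gamma1 (fun y => genL π f y) f x
        = ∑ i, pderiv' (fun y => genL π f y) i x * pderiv' f i x := rfl
    rw [e2]
    refine Finset.sum_congr rfl fun i _ => ?_
    rw [pderiv'_genL hπ hf i x, add_mul, Finset.sum_mul, Finset.sum_mul,
      ← Finset.sum_add_distrib]
  rw [h1, h2]
  simp only [Finset.sum_add_distrib, Finset.mul_sum]
  rw [Finset.sum_comm (f := fun j i => 2 * (pderiv' (fun y => Real.log (π y)) j x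
        * (pderiv' f i x * pderiv2 f j i x))),
    Finset.sum_comm (f := fun j i => 2 * (pderiv2 f j i x)^2),
    Finset.sum_comm (f := fun j i => 2 * (pderiv' f i x
        * pderiv2 (fun y => pderiv' f i y) j j x))]
  have hs1 : ∑ i, ∑ j, 2 * (pderiv' (fun y => Real.log (π y)) j x
        * (pderiv' f i x * pderiv2 f j i x))
      = 2 * ∑ i, ∑ j, pderiv' (fun y => Real.log (π y)) j x
          * pderiv2 f i j x * pderiv' f i x := by
    rw [Finset.mul_sum]
    refine Finset.sum_congr rfl fun i _ => ?_
    rw [Finset.mul_sum]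
    refine Finset.sum_congr rfl fun j _ => ?_
    rw [pderiv2_symm hf i j]; ring
  have hs2 : ∑ i, ∑ j, 2 * (pderiv2 f j i x)^2 = 2 * ∑ i, ∑ j, (pderiv2 f i j x)^2 := by
    rw [Finset.mul_sum]
    refine Finset.sum_congr rfl fun i _ => ?_
    rw [Finset.mul_sum]
    refine Finset.sum_congr rfl fun j _ => ?_
    rw [pderiv2_symm hf i j]
  have hs3 : ∑ i, ∑ j, 2 * (pderiv' f i x * pderiv2 (fun y => pderiv' f i y) j j x)
      = 2 * ∑ i, ∑ j, pderiv2 (fun y => pderiv' f i y) j j x * pderiv' f i x := by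
    rw [Finset.mul_sum]
    refine Finset.sum_congr rfl fun i _ => ?_
    rw [Finset.mul_sum]
    refine Finset.sum_congr rfl fun j _ => ?_
    ring
  rw [hs1, hs2, hs3]
  have hs4 : ∑ i, ∑ j, (pderiv2 (fun y => Real.log (π y)) i j x * pderiv' f j x
        + pderiv' (fun y => Real.log (π y)) j x * pderiv2 f i j x) * pderiv' f i x
      = (∑ i, ∑ j, pderiv2 (fun y => Real.log (π y)) i j x * pderiv' f i x * pderiv' f j x)
        + ∑ i, ∑ j, pderiv' (fun y => Real.log (π y)) j x * pderiv2 f i j x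
            * pderiv' f i x := by
    rw [← Finset.sum_add_distrib]
    refine Finset.sum_congr rfl fun i _ => ?_
    rw [← Finset.sum_add_distrib]
    refine Finset.sum_congr rfl fun j _ => ?_
    ring
  rw [hs4]
  ring

theorem GammaI_eq {π f : EuclideanSpace ℝ (Fin d) → ℝ}
    (γ : EuclideanSpace ℝ (Fin d) → EuclideanSpace ℝ (Fin d))
    (hf : ContDiff ℝ (⊤:ℕ∞) f) (x : EuclideanSpace ℝ (Fin d)) :
    GammaI π γ f x
      = -(∑ i, ∑ j, γ x j * pderiv' f i x * pderiv2 f j i x)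
        + ((∑ j, pderiv' (fun y => Real.log (π y)) j x * pderiv' f j x)
            + ∑ j, pderiv2 f j j x) * ∑ i, pderiv' f i x * γ x i := by
  unfold GammaI
  have e1 : genL π f x = (∑ j, pderiv' (fun y => Real.log (π y)) j x * pderiv' f j x)
      + ∑ j, pderiv2 f j j x := rfl
  rw [e1]
  congr 1
  have h2 : ∑ i, γ x i * pderiv' (fun y => Gamma1 f f y) i x
      = ∑ j, ∑ i, 2 * (γ x j * pderiv' f i x * pderiv2 f j i x) := by
    refine Finset.sum_congr rfl fun j _ => ?_
    rw [pderiv'_gamma1 hf j x, Finset.mul_sum]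
    refine Finset.sum_congr rfl fun i _ => ?_
    ring
  rw [h2, Finset.sum_comm]
  rw [neg_mul, neg_eq_iff_eq_neg, neg_neg, Finset.mul_sum]
  refine Finset.sum_congr rfl fun i _ => ?_
  rw [Finset.mul_sum]
  refine Finset.sum_congr rfl fun j _ => ?_
  ring

end GammaAux

namespace GammaAux

theorem dmul {n : ℕ} (c : ℝ) (f h : Fin n → ℝ) :
    (∑ i, ∑ j, c * (f i * h j)) = c * ((∑ i, f i) * (∑ j, h j)) := by
  rw [Finset.sum_mul_sum, Finset.mul_sum]
  refine Finset.sum_congr rfl fun i _ => ?_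
  rw [Finset.mul_sum]

theorem cmul2 {n : ℕ} (c : ℝ) (t : Fin n → Fin n → ℝ) :
    (∑ i, ∑ j, c * t i j) = c * ∑ i, ∑ j, t i j := by
  simp [Finset.mul_sum]

theorem smul2 {n : ℕ} (c e : ℝ) (t : Fin n → ℝ) :
    (∑ i, c * (e * t i)) = c * (e * ∑ i, t i) := by
  simp [Finset.mul_sum]

theorem alg (n : ℕ) (A M : Fin n → Fin n → ℝ) (hA : ∀ i j, A i j = A j i)
    (b g L : Fin n → ℝ) :
    (∑ i, ∑ j, (if i = j then
          A i i + (1/2:ℝ) * (∑ k, g k * b k) - (1/2:ℝ) * g i * b i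
        else A i j - (1/4:ℝ) * (g i * b j + g j * b i))^2)
      + ∑ i, ∑ j, (-M i j + ((3 - 2*(n:ℝ))/8) * g i * g j
          - (1/8:ℝ) * (if i = j then ∑ k, g k ^2 else 0)
          + (1/2:ℝ) * (g i * L j + g j * L i)) * b i * b j
    = ((∑ i, ∑ j, (A i j)^2) - ∑ i, ∑ j, M i j * b i * b j)
        - (∑ i, ∑ j, g j * b i * A j i)
        + (∑ k, g k * b k) * ((∑ j, L j * b j) + ∑ j, A j j) := by
  have hC1 : (∑ i, ∑ j, A i j * (g i * b j)) = ∑ i, ∑ j, g j * b i * A j i := by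
    rw [Finset.sum_comm]
    exact Finset.sum_congr rfl fun i _ => Finset.sum_congr rfl fun j _ => by ring
  have hC2 : (∑ i, ∑ j, A i j * (g j * b i)) = ∑ i, ∑ j, g j * b i * A j i := by
    refine Finset.sum_congr rfl fun i _ => Finset.sum_congr rfl fun j _ => ?_
    rw [hA i j]; ring
  -- expansion of the Hessian square sum
  have hH : (∑ i, ∑ j, (if i = j then
          A i i + (1/2:ℝ) * (∑ k, g k * b k) - (1/2:ℝ) * g i * b i
        else A i j - (1/4:ℝ) * (g i * b j + g j * b i))^2)
      = (∑ i, ∑ j, (A i j)^2) - (∑ i, ∑ j, g j * b i * A j i)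
        + (1/8:ℝ) * ((∑ k, g k ^2) * (∑ k, b k ^2))
        + ((2*(n:ℝ) - 3)/8) * (∑ k, g k * b k)^2
        + (∑ k, g k * b k) * (∑ j, A j j) := by
    have step : ∀ i j : Fin n, (if i = j then
          A i i + (1/2:ℝ) * (∑ k, g k * b k) - (1/2:ℝ) * g i * b i
        else A i j - (1/4:ℝ) * (g i * b j + g j * b i))^2
        = (A i j)^2 + (-(1/2:ℝ)) * (A i j * (g i * b j))
            + (-(1/2:ℝ)) * (A i j * (g j * b i))
            + (1/16:ℝ) * (g i ^2 * b j ^2) + (1/8:ℝ) * ((g i * b i) * (g j * b j))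
            + (1/16:ℝ) * (b i ^2 * g j ^2)
          + (if i = j then (∑ k, g k * b k) * A i i
              + (-(1/2:ℝ)) * ((∑ k, g k * b k) * (g i * b i))
              + (∑ k, g k * b k)^2/4 else 0) := by
      intro i j
      by_cases h : i = j
      · subst h; simp only [eq_self_iff_true, if_true]; ring
      · simp only [if_neg h]; ring
    simp only [step]
    simp only [Finset.sum_add_distrib]
    have collapse : ∀ i : Fin n, (∑ j, if i = j then (∑ k, g k * b k) * A i i
          + (-(1/2:ℝ)) * ((∑ k, g k * b k) * (g i * b i))
          + (∑ k, g k * b k)^2/4 else 0)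
        = (∑ k, g k * b k) * A i i
          + (-(1/2:ℝ)) * ((∑ k, g k * b k) * (g i * b i))
          + (∑ k, g k * b k)^2/4 := by
      intro i
      rw [Finset.sum_ite_eq]
      simp
    simp only [collapse]
    rw [Finset.sum_add_distrib, Finset.sum_add_distrib]
    rw [cmul2 (-(1/2:ℝ)) (fun i j => A i j * (g i * b j)),
      cmul2 (-(1/2:ℝ)) (fun i j => A i j * (g j * b i))]
    rw [hC1, hC2]
    rw [dmul (1/16:ℝ) (fun i => g i ^2) (fun j => b j ^2),
      dmul (1/8:ℝ) (fun i => g i * b i) (fun j => g j * b j),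
      dmul (1/16:ℝ) (fun i => b i ^2) (fun j => g j ^2)]
    rw [← Finset.mul_sum Finset.univ (fun i => A i i) (∑ k, g k * b k),
      smul2 (-(1/2:ℝ)) (∑ k, g k * b k) (fun i => g i * b i),
      Finset.sum_const, Finset.card_univ, Fintype.card_fin, nsmul_eq_mul]
    ring
  -- expansion of the R-form sum
  have hR : (∑ i, ∑ j, (-M i j + ((3 - 2*(n:ℝ))/8) * g i * g j
          - (1/8:ℝ) * (if i = j then ∑ k, g k ^2 else 0)
          + (1/2:ℝ) * (g i * L j + g j * L i)) * b i * b j)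
      = -(∑ i, ∑ j, M i j * b i * b j) + ((3 - 2*(n:ℝ))/8) * (∑ k, g k * b k)^2
        - (1/8:ℝ) * ((∑ k, g k ^2) * (∑ k, b k ^2))
        + (∑ k, g k * b k) * (∑ j, L j * b j) := by
    have step : ∀ i j : Fin n, (-M i j + ((3 - 2*(n:ℝ))/8) * g i * g j
          - (1/8:ℝ) * (if i = j then ∑ k, g k ^2 else 0)
          + (1/2:ℝ) * (g i * L j + g j * L i)) * b i * b j
        = -(M i j * b i * b j)
            + ((3 - 2*(n:ℝ))/8) * ((g i * b i) * (g j * b j))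
            + (1/2:ℝ) * ((g i * b i) * (L j * b j))
            + (1/2:ℝ) * ((L i * b i) * (g j * b j))
          + (if i = j then (-(1/8:ℝ)) * ((∑ k, g k ^2) * (b i * b i)) else 0) := by
      intro i j
      by_cases h : i = j
      · subst h; simp only [eq_self_iff_true, if_true]; ring
      · simp only [if_neg h]; ring
    simp only [step]
    simp only [Finset.sum_add_distrib, Finset.sum_neg_distrib]
    have collapse : ∀ i : Fin n,
        (∑ j, if i = j then (-(1/8:ℝ)) * ((∑ k, g k ^2) * (b i * b i)) else 0)
        = (-(1/8:ℝ)) * ((∑ k, g k ^2) * (b i * b i)) := by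
      intro i; rw [Finset.sum_ite_eq]; simp
    simp only [collapse]
    rw [dmul ((3 - 2*(n:ℝ))/8) (fun i => g i * b i) (fun j => g j * b j),
      dmul (1/2:ℝ) (fun i => g i * b i) (fun j => L j * b j),
      dmul (1/2:ℝ) (fun i => L i * b i) (fun j => g j * b j),
      smul2 (-(1/8:ℝ)) (∑ k, g k ^2) (fun i => b i * b i)]
    have hb2 : (∑ i, b i * b i) = ∑ i, b i ^ 2 :=
      Finset.sum_congr rfl fun i _ => by ring
    rw [hb2]
    ring
  rw [hH, hR]
  ring

end GammaAux


/-- Step in the proof of Theorem 2.2: under the tensor condition `ℜ ⪰ λ I`,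
pointwise `Γ₂(f,f) + Γ_I(f,f) ≥ ‖𝔥ess f‖_F² + λ‖∇f‖²`, and in particular
`Γ₂(f,f) + Γ_I(f,f) ≥ λ Γ₁(f,f)`. -/
theorem gamma_lower_bound_pointwise
    (d : ℕ) (hd : 1 ≤ d)
    (π : EuclideanSpace ℝ (Fin d) → ℝ) (hπ : ContDiff ℝ (⊤ : ℕ∞) π)
    (hπpos : ∀ x, 0 < π x)
    (γ : EuclideanSpace ℝ (Fin d) → EuclideanSpace ℝ (Fin d))
    (hγ : ContDiff ℝ (⊤ : ℕ∞) γ)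
    (lam : ℝ) (hlam : 0 < lam)
    (hcond : ∀ (x v : EuclideanSpace ℝ (Fin d)),
      lam * ‖v‖ ^ 2 ≤ ∑ i, ∑ j, Rtensor π γ i j x * v i * v j)
    (f : EuclideanSpace ℝ (Fin d) → ℝ) (hf : ContDiff ℝ (⊤ : ℕ∞) f)
    (x : EuclideanSpace ℝ (Fin d)) :
    (∑ i, ∑ j, (hessM γ f i j x) ^ 2) + lam * Gamma1 f f x ≤
        Gamma2 π f x + GammaI π γ f x ∧
      lam * Gamma1 f f x ≤ Gamma2 π f x + GammaI π γ f x := by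
  have hlp : ContDiff ℝ (⊤ : ℕ∞) fun y => Real.log (π y) :=
    hπ.log fun y => (hπpos y).ne'
  -- the master pointwise identity
  have halg := GammaAux.alg d (fun i j => pderiv2 f i j x)
    (fun i j => pderiv2 (fun y => Real.log (π y)) i j x)
    (fun i j => GammaAux.pderiv2_symm hf i j x)
    (fun k => pderiv' f k x) (fun k => γ x k)
    (fun k => pderiv' (fun y => Real.log (π y)) k x)
  simp only [] at halg
  have key : (∑ i, ∑ j, (hessM γ f i j x) ^ 2)
      + (∑ i, ∑ j, Rtensor π γ i j x * pderiv' f i x * pderiv' f j x)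
      = Gamma2 π f x + GammaI π γ f x := by
    rw [GammaAux.Gamma2_eq hlp hf x, GammaAux.GammaI_eq γ hf x]
    unfold hessM Rtensor
    rw [halg]
    have : (∑ i, pderiv' f i x * γ x i) = ∑ k, γ x k * pderiv' f k x :=
      Finset.sum_congr rfl fun i _ => mul_comm _ _
    rw [this]
    ring
  -- the gradient as a vector in Euclidean space
  set v : EuclideanSpace ℝ (Fin d) := (WithLp.equiv 2 (Fin d → ℝ)).symm
    (fun i => pderiv' f i x) with hv
  have hvi : ∀ i, v i = pderiv' f i x := fun i => rfl
  have hnorm : ‖v‖ ^ 2 = Gamma1 f f x := by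
    rw [EuclideanSpace.norm_eq, Real.sq_sqrt (Finset.sum_nonneg fun i _ => by positivity)]
    unfold Gamma1
    refine Finset.sum_congr rfl fun i _ => ?_
    rw [hvi i, Real.norm_eq_abs, sq_abs, sq]
  have hcnd := hcond x v
  rw [hnorm] at hcnd
  have hcnd' : lam * Gamma1 f f x
      ≤ ∑ i, ∑ j, Rtensor π γ i j x * pderiv' f i x * pderiv' f j x := hcnd
  have hsq : (0:ℝ) ≤ ∑ i, ∑ j, (hessM γ f i j x) ^ 2 :=
    Finset.sum_nonneg fun i _ => Finset.sum_nonneg fun j _ => sq_nonneg _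
  constructor
  · linarith
  · linarith

end
end
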